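/- arXiv:1903.10402 — 2 statements merged into one kernel-verified Lean document; each statement's English description precedes it below -/
import Mathlib

section
/- Mutual exclusion for the symmetric algorithm: in every reachable global state, no two distinct processes have their program counters simultaneously at the critical section. -/
/-!
Model of the symmetric mutual-exclusion algorithm (no coordinator).

Shared variables: `turn ∈ {0,…,N−1, THINKING, FREE}` (initially FREE) and
`flag : Fin N → {REMAINDER, WAITING, CANDIDATE}` (initially all REMAINDER,
`flag[i]` writable only by process `i`).

Entry automaton for process `i` (program-counter states):
* `s1`   : set `flag[i] := WAITING`, go to `s2`;
* `s2`   : wait while `turn = THINKING`; if `turn = FREE` go to `s3`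
           (beginning of the candidate phase); if `turn` is a process
           identifier, go to `s4`;
* `s3`   : set `flag[i] := CANDIDATE`, go to `s32` (state 3.2);
* `s32`  : repeat-loop test: if `turn = FREE ∧ flag[i] = CANDIDATE`
           go to `s33` (state 3.3), otherwise leave the loop to `s37`;
* `s33`  : set `nCandidates := 0`, `minCandidate := −1`, initialize the scan
           counter, go to `s34`;
* `s34`  : scan loop (states 3.4/3.4.1/3.4.2), `j` from `N−1` down to `0`:
           if the scan is over, go to `s35`; otherwise inspect `flag[j]`:
           if it is CANDIDATE go to `s341` else decrement `j`;
* `s341` : set `nCandidates := nCandidates + 1`, `minCandidate := j`,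
           decrement `j`, back to `s34`;
* `s35`  : if `turn = FREE ∧ nCandidates = 1` go to `s351` (state 3.5.1),
           otherwise go to `s36`;
* `s351` : set `turn := i`, go to `s352` (state 3.5.2);
* `s352` : go to `s36`;
* `s36`  : if `turn ≠ FREE ∨ minCandidate < i` set `flag[i] := WAITING`
           (state 3.6); in either case return to the repeat test `s32`;
* `s37`  : after the repeat ends, set `flag[i] := WAITING`, go to `s4`;
* `s4`   : wait until `turn = i`, then enter the critical section `cs`.

Exit automaton for process `i`:
* `cs`   : set `turn := THINKING`, go to `s5` (state 5);
* `s5`   : set `flag[i] := REMAINDER`, `nextTurn := THINKING`, initialize the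
           scan counter, go to `s6`;
* `s6`   : loop (states 6/6.1/6.2) with `j` over `i+1,…,N−1,0,…,i−1` while
           `nextTurn = THINKING`: if `flag[j] ≠ REMAINDER` set
           `nextTurn := j`; when the loop ends go to `s63` (state 6.3);
* `s63`  : if `nextTurn = THINKING` set `turn := FREE` else
           `turn := nextTurn`; go to `s8` (state 8).
-/

namespace Sym

/-- Values of the shared variable `turn` (and of `nextTurn`). -/
inductive Turn (N : ℕ)
  | free
  | thinking
  | id : Fin N → Turn N
  deriving DecidableEq

inductive Flag
  | remainder | waiting | candidate
  deriving DecidableEq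

/-- Program counter of a process. -/
inductive PC
  | s1 | s2 | s3 | s32 | s33 | s34 | s341 | s35 | s351 | s352 | s36 | s37
  | s4 | cs | s5 | s6 | s63 | s8
  deriving DecidableEq

/-- A global state: shared variables plus each process's program counter and
local variables (`cnt` is the loop counter `j`, reused by the candidate scan
and the exit scan). -/
structure St (N : ℕ) where
  turn : Turn N
  flag : Fin N → Flag
  pc : Fin N → PC
  nCand : Fin N → ℕ
  minCand : Fin N → ℤ
  nextTurn : Fin N → Turn N
  cnt : Fin N → ℕ

/-- The initial global state. -/
def initSt (N : ℕ) : St N where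
  turn := .free
  flag := fun _ => .remainder
  pc := fun _ => .s1
  nCand := fun _ => 0
  minCand := fun _ => 0
  nextTurn := fun _ => .thinking
  cnt := fun _ => 0

/-- In the exit scan of process `i`, the index examined when the counter is
`k` is `(i + k + 1) mod N`: the scan order is `i+1, …, N−1, 0, …, i−1`. -/
def nxt {N : ℕ} (i : Fin N) (k : ℕ) : Fin N :=
  ⟨(i.val + k + 1) % N, Nat.mod_lt _ i.pos⟩

/-- One enabled transition of process `i`. -/
inductive Step {N : ℕ} : Fin N → St N → St N → Prop
  | t1 (s : St N) (i : Fin N) (h : s.pc i = .s1) :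
      Step i s { s with flag := Function.update s.flag i .waiting,
                        pc := Function.update s.pc i .s2 }
  | t2free (s : St N) (i : Fin N) (h : s.pc i = .s2) (ht : s.turn = .free) :
      Step i s { s with pc := Function.update s.pc i .s3 }
  | t2id (s : St N) (i j : Fin N) (h : s.pc i = .s2) (ht : s.turn = .id j) :
      Step i s { s with pc := Function.update s.pc i .s4 }
  | t3 (s : St N) (i : Fin N) (h : s.pc i = .s3) :
      Step i s { s with flag := Function.update s.flag i .candidate,
                        pc := Function.update s.pc i .s32 }
  | t32enter (s : St N) (i : Fin N) (h : s.pc i = .s32)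
      (ht : s.turn = .free) (hf : s.flag i = .candidate) :
      Step i s { s with pc := Function.update s.pc i .s33 }
  | t32exit (s : St N) (i : Fin N) (h : s.pc i = .s32)
      (hc : ¬ (s.turn = .free ∧ s.flag i = .candidate)) :
      Step i s { s with pc := Function.update s.pc i .s37 }
  | t33 (s : St N) (i : Fin N) (h : s.pc i = .s33) :
      Step i s { s with nCand := Function.update s.nCand i 0,
                        minCand := Function.update s.minCand i (-1),
                        cnt := Function.update s.cnt i N,
                        pc := Function.update s.pc i .s34 }
  | t34done (s : St N) (i : Fin N) (h : s.pc i = .s34) (hc : s.cnt i = 0) :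
      Step i s { s with pc := Function.update s.pc i .s35 }
  | t34cand (s : St N) (i j : Fin N) (h : s.pc i = .s34) (hc : s.cnt i ≠ 0)
      (hj : (j : ℕ) = s.cnt i - 1) (hf : s.flag j = .candidate) :
      Step i s { s with pc := Function.update s.pc i .s341 }
  | t34nocand (s : St N) (i j : Fin N) (h : s.pc i = .s34) (hc : s.cnt i ≠ 0)
      (hj : (j : ℕ) = s.cnt i - 1) (hf : s.flag j ≠ .candidate) :
      Step i s { s with cnt := Function.update s.cnt i (s.cnt i - 1),
                        pc := Function.update s.pc i .s34 }
  | t341 (s : St N) (i : Fin N) (h : s.pc i = .s341) :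
      Step i s { s with nCand := Function.update s.nCand i (s.nCand i + 1),
                        minCand := Function.update s.minCand i ((s.cnt i : ℤ) - 1),
                        cnt := Function.update s.cnt i (s.cnt i - 1),
                        pc := Function.update s.pc i .s34 }
  | t35yes (s : St N) (i : Fin N) (h : s.pc i = .s35)
      (ht : s.turn = .free) (hn : s.nCand i = 1) :
      Step i s { s with pc := Function.update s.pc i .s351 }
  | t35no (s : St N) (i : Fin N) (h : s.pc i = .s35)
      (hc : ¬ (s.turn = .free ∧ s.nCand i = 1)) :
      Step i s { s with pc := Function.update s.pc i .s36 }
  | t351 (s : St N) (i : Fin N) (h : s.pc i = .s351) :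
      Step i s { s with turn := .id i, pc := Function.update s.pc i .s352 }
  | t352 (s : St N) (i : Fin N) (h : s.pc i = .s352) :
      Step i s { s with pc := Function.update s.pc i .s36 }
  | t36yes (s : St N) (i : Fin N) (h : s.pc i = .s36)
      (hc : s.turn ≠ .free ∨ s.minCand i < (i : ℤ)) :
      Step i s { s with flag := Function.update s.flag i .waiting,
                        pc := Function.update s.pc i .s32 }
  | t36no (s : St N) (i : Fin N) (h : s.pc i = .s36)
      (hc : ¬ (s.turn ≠ .free ∨ s.minCand i < (i : ℤ))) :
      Step i s { s with pc := Function.update s.pc i .s32 }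
  | t37 (s : St N) (i : Fin N) (h : s.pc i = .s37) :
      Step i s { s with flag := Function.update s.flag i .waiting,
                        pc := Function.update s.pc i .s4 }
  | t4 (s : St N) (i : Fin N) (h : s.pc i = .s4) (ht : s.turn = .id i) :
      Step i s { s with pc := Function.update s.pc i .cs }
  | tcs (s : St N) (i : Fin N) (h : s.pc i = .cs) :
      Step i s { s with turn := .thinking, pc := Function.update s.pc i .s5 }
  | t5 (s : St N) (i : Fin N) (h : s.pc i = .s5) :
      Step i s { s with flag := Function.update s.flag i .remainder,
                        nextTurn := Function.update s.nextTurn i .thinking,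
                        cnt := Function.update s.cnt i 0,
                        pc := Function.update s.pc i .s6 }
  | t6exit (s : St N) (i : Fin N) (h : s.pc i = .s6)
      (hc : s.nextTurn i ≠ .thinking ∨ s.cnt i = N - 1) :
      Step i s { s with pc := Function.update s.pc i .s63 }
  | t6found (s : St N) (i : Fin N) (h : s.pc i = .s6)
      (hnt : s.nextTurn i = .thinking) (hcnt : s.cnt i ≠ N - 1)
      (hf : s.flag (nxt i (s.cnt i)) ≠ .remainder) :
      Step i s { s with
        nextTurn := Function.update s.nextTurn i (.id (nxt i (s.cnt i))),
        cnt := Function.update s.cnt i (s.cnt i + 1),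
        pc := Function.update s.pc i .s6 }
  | t6notfound (s : St N) (i : Fin N) (h : s.pc i = .s6)
      (hnt : s.nextTurn i = .thinking) (hcnt : s.cnt i ≠ N - 1)
      (hf : s.flag (nxt i (s.cnt i)) = .remainder) :
      Step i s { s with cnt := Function.update s.cnt i (s.cnt i + 1),
                        pc := Function.update s.pc i .s6 }
  | t63free (s : St N) (i : Fin N) (h : s.pc i = .s63)
      (hn : s.nextTurn i = .thinking) :
      Step i s { s with turn := .free, pc := Function.update s.pc i .s8 }
  | t63id (s : St N) (i b : Fin N) (h : s.pc i = .s63)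
      (hn : s.nextTurn i = .id b) :
      Step i s { s with turn := .id b, pc := Function.update s.pc i .s8 }

/-- An execution: a sequence of global states starting from the initial
state, together with a schedule; at each instant either exactly one process
takes one of its enabled transitions, or (if `none` is scheduled) the state
stutters. -/
structure Exec (N : ℕ) where
  states : ℕ → St N
  sched : ℕ → Option (Fin N)
  init : states 0 = initSt N
  step : ∀ n, match sched n with
    | some i => Step i (states n) (states (n + 1))
    | none => states (n + 1) = states n

/-- A process is enabled if it can take a transition. -/
def Enabled {N : ℕ} (i : Fin N) (s : St N) : Prop :=
  ∃ s', Step i s s'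

/-- Weak fairness: a process whose next transition is continuously enabled
eventually takes it. -/
def Exec.Fair {N : ℕ} (e : Exec N) : Prop :=
  ∀ i n, (∀ m, n ≤ m → Enabled i (e.states m)) → ∃ m, n ≤ m ∧ e.sched m = some i

/-- A state is reachable if it occurs in some execution. -/
def Reachable {N : ℕ} (s : St N) : Prop :=
  ∃ e : Exec N, ∃ n, e.states n = s

/-- The extended critical section: program-counter states in `[CS, 8)`. -/
def ExtCS : PC → Prop := fun p => p = .cs ∨ p = .s5 ∨ p = .s6 ∨ p = .s63

/-- Program-counter states in the interval `[3, 4]`: from entering the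
candidate phase up to (and including) waiting at state 4. -/
def In34 : PC → Prop := fun p =>
  p = .s3 ∨ p = .s32 ∨ p = .s33 ∨ p = .s34 ∨ p = .s341 ∨ p = .s35 ∨
  p = .s351 ∨ p = .s352 ∨ p = .s36 ∨ p = .s37 ∨ p = .s4

/-- Position of `x` in the cyclic order `a+1, …, N−1, 0, …, a−1, a`
starting just after `a` (so `rank a (a+1) = 0` and `rank a a = N−1`). -/
def rank {N : ℕ} (a x : Fin N) : ℕ := (x.val + N - a.val - 1) % N

end Sym
set_option maxHeartbeats 1000000

namespace SymProof
open Sym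

/-- Scan/candidate region of the program counter. -/
def CFp : PC → Prop := fun q =>
  q = .s33 ∨ q = .s34 ∨ q = .s341 ∨ q = .s35 ∨ q = .s351 ∨ q = .s352

/-- `ex q c k`: with program counter `q` and scan counter `c`, index `k`
has already been examined by the candidate scan. -/
def ex (q : PC) (c k : ℕ) : Prop :=
  (q = .s34 ∧ c ≤ k) ∨ (q = .s341 ∧ c - 1 ≤ k) ∨ q = .s35 ∨ q = .s351 ∨ q = .s352

/-- Effective candidate count (including the pending increment at `s341`). -/
def cnt1 (q : PC) (n : ℕ) : ℕ := n + (if q = .s341 then 1 else 0)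

def good (q : PC) (c n k : ℕ) : Prop := 1 ≤ cnt1 q n ∧ (ex q c k → 2 ≤ cnt1 q n)

lemma cfp_of_ex {q : PC} {c k : ℕ} (h : ex q c k) : CFp q := by
  rcases h with ⟨e, _⟩ | ⟨e, _⟩ | e | e | e <;> subst e <;> simp [CFp, ExtCS]

structure Inv {N : ℕ} (s : St N) : Prop where
  i1 : ∀ i, CFp (s.pc i) → s.flag i = .candidate
  sc : ∀ i : Fin N, (s.pc i = .s34 ∨ s.pc i = .s341) → s.cnt i ≤ i.val → 1 ≤ s.nCand i
  b1 : ∀ i, (s.pc i = .s351 ∨ s.pc i = .s352) → s.nCand i = 1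
  pr : ∀ i j : Fin N, i ≠ j → ex (s.pc i) (s.cnt i) j.val → ex (s.pc j) (s.cnt j) i.val →
        good (s.pc i) (s.cnt i) (s.nCand i) i.val ∨ good (s.pc j) (s.cnt j) (s.nCand j) j.val
  w1 : ∀ i, s.pc i = .s351 → s.turn = .free
  w2 : ∀ i, s.pc i = .s352 → s.turn = .id i
  w3 : ∀ i, s.pc i = .cs → s.turn = .id i
  w4 : ∀ i, (s.pc i = .s5 ∨ s.pc i = .s6 ∨ s.pc i = .s63) → s.turn = .thinking
  w5 : ∀ i j : Fin N, ExtCS (s.pc i) → ExtCS (s.pc j) → i = j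

variable {N : ℕ}

lemma inv_init : Inv (initSt N) := by
  constructor <;> intro i <;> simp [initSt, CFp, ex, ExtCS]

/-- Generic preservation lemma for transitions that only move the program
counter of `p` to a "harmless" location (outside the scan region, except
possibly `s33`, and outside the extended critical section), possibly also
updating `p`'s own flag. -/
lemma inv_boring {s : St N} (H : Inv s) (p : Fin N) (X : PC) (F : Flag)
    (h1 : X = .s33 ∨ ¬ CFp X) (h2 : ¬ ExtCS X)
    (hF : CFp X → F = .candidate) :
    Inv { s with flag := Function.update s.flag p F,
                 pc := Function.update s.pc p X } := by
  obtain ⟨i1, sc, b1, pr, w1, w2, w3, w4, w5⟩ := H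
  have hex : ∀ c k, ¬ ex X c k := by
    intro c k hx
    rcases h1 with rfl | h1
    · rcases hx with ⟨e, _⟩ | ⟨e, _⟩ | e | e | e <;> cases e
    · exact h1 (cfp_of_ex hx)
  have hX34 : X ≠ .s34 ∧ X ≠ .s341 ∧ X ≠ .s351 ∧ X ≠ .s352 ∧ X ≠ .s351 := by
    rcases h1 with rfl | h1
    · exact ⟨by simp [CFp, ExtCS], by simp [CFp, ExtCS], by simp [CFp, ExtCS], by simp [CFp, ExtCS], by simp [CFp, ExtCS]⟩
    · refine ⟨?_, ?_, ?_, ?_, ?_⟩ <;> rintro rfl <;> exact h1 (by simp [CFp, ExtCS])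
  refine ⟨?_, ?_, ?_, ?_, ?_, ?_, ?_, ?_, ?_⟩
  all_goals dsimp only
  · intro k hk
    rcases eq_or_ne k p with rfl | hkp
    · rw [Function.update_self] at hk ⊢; exact hF hk
    · rw [Function.update_of_ne hkp] at hk ⊢; exact i1 k hk
  · intro k hk hc
    rcases eq_or_ne k p with rfl | hkp
    · rw [Function.update_self] at hk
      rcases hk with e | e
      · exact absurd e hX34.1
      · exact absurd e hX34.2.1
    · rw [Function.update_of_ne hkp] at hk; exact sc k hk hc
  · intro k hk
    rcases eq_or_ne k p with rfl | hkp
    · rw [Function.update_self] at hk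
      rcases hk with e | e
      · exact absurd e hX34.2.2.1
      · exact absurd e hX34.2.2.2.1
    · rw [Function.update_of_ne hkp] at hk; exact b1 k hk
  · intro k l hkl e1 e2
    rcases eq_or_ne k p with rfl | hkp
    · rw [Function.update_self] at e1; exact absurd e1 (hex _ _)
    · rcases eq_or_ne l p with rfl | hlp
      · rw [Function.update_self] at e2; exact absurd e2 (hex _ _)
      · rw [Function.update_of_ne hkp] at e1 ⊢
        rw [Function.update_of_ne hlp] at e2
        rw [Function.update_of_ne hlp]
        exact pr k l hkl e1 e2
  · intro k hk
    rcases eq_or_ne k p with rfl | hkp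
    · rw [Function.update_self] at hk; exact absurd hk hX34.2.2.1
    · rw [Function.update_of_ne hkp] at hk; exact w1 k hk
  · intro k hk
    rcases eq_or_ne k p with rfl | hkp
    · rw [Function.update_self] at hk; exact absurd hk hX34.2.2.2.1
    · rw [Function.update_of_ne hkp] at hk; exact w2 k hk
  · intro k hk
    rcases eq_or_ne k p with rfl | hkp
    · rw [Function.update_self] at hk; exact absurd hk (by rintro rfl; exact h2 (by simp [CFp, ExtCS]))
    · rw [Function.update_of_ne hkp] at hk; exact w3 k hk
  · intro k hk
    rcases eq_or_ne k p with rfl | hkp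
    · rw [Function.update_self] at hk
      rcases hk with e | e | e <;> (subst e; exact (h2 (by simp [ExtCS])).elim)
    · rw [Function.update_of_ne hkp] at hk; exact w4 k hk
  · intro k l hk hl
    rcases eq_or_ne k p with rfl | hkp
    · rw [Function.update_self] at hk; exact absurd hk h2
    · rcases eq_or_ne l p with rfl | hlp
      · rw [Function.update_self] at hl; exact absurd hl h2
      · rw [Function.update_of_ne hkp] at hk
        rw [Function.update_of_ne hlp] at hl
        exact w5 k l hk hl

/-- Generic preservation lemma for transitions inside the exit section
(`s5 → s6`, `s6 → s6`, `s6 → s63`): `turn` is unchanged and the moving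
process stays inside the extended critical section. -/
lemma inv_inD {s : St N} (H : Inv s) (p : Fin N) (X : PC) (F : Flag)
    (T : Fin N → Turn N) (C : ℕ)
    (hX : X = .s6 ∨ X = .s63) (hold : s.pc p = .s5 ∨ s.pc p = .s6) :
    Inv { s with flag := Function.update s.flag p F,
                 nextTurn := T,
                 cnt := Function.update s.cnt p C,
                 pc := Function.update s.pc p X } := by
  obtain ⟨i1, sc, b1, pr, w1, w2, w3, w4, w5⟩ := H
  have holdE : ExtCS (s.pc p) := by
    rcases hold with e | e <;> rw [e] <;> simp [CFp, ExtCS]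
  refine ⟨?_, ?_, ?_, ?_, ?_, ?_, ?_, ?_, ?_⟩
  all_goals dsimp only
  · intro k hk
    rcases eq_or_ne k p with rfl | hkp
    · rw [Function.update_self] at hk; rcases hX with rfl | rfl <;> exact absurd hk (by simp [CFp, ExtCS])
    · rw [Function.update_of_ne hkp] at hk ⊢; exact i1 k hk
  · intro k hk hc
    rcases eq_or_ne k p with rfl | hkp
    · rw [Function.update_self] at hk
      rcases hX with rfl | rfl <;> rcases hk with e | e <;> cases e
    · rw [Function.update_of_ne hkp] at hk hc; exact sc k hk hc
  · intro k hk
    rcases eq_or_ne k p with rfl | hkp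
    · rw [Function.update_self] at hk
      rcases hX with rfl | rfl <;> rcases hk with e | e <;> cases e
    · rw [Function.update_of_ne hkp] at hk; exact b1 k hk
  · intro k l hkl e1 e2
    rcases eq_or_ne k p with rfl | hkp
    · rw [Function.update_self] at e1
      exfalso; rcases hX with rfl | rfl <;>
        rcases e1 with ⟨e, _⟩ | ⟨e, _⟩ | e | e | e <;> cases e
    · rcases eq_or_ne l p with rfl | hlp
      · rw [Function.update_self] at e2
        exfalso; rcases hX with rfl | rfl <;>
          rcases e2 with ⟨e, _⟩ | ⟨e, _⟩ | e | e | e <;> cases e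
      · simp only [Function.update_of_ne hkp, Function.update_of_ne hlp] at e1 e2 ⊢
        exact pr k l hkl e1 e2
  · intro k hk
    rcases eq_or_ne k p with rfl | hkp
    · rw [Function.update_self] at hk; rcases hX with rfl | rfl <;> cases hk
    · rw [Function.update_of_ne hkp] at hk; exact w1 k hk
  · intro k hk
    rcases eq_or_ne k p with rfl | hkp
    · rw [Function.update_self] at hk; rcases hX with rfl | rfl <;> cases hk
    · rw [Function.update_of_ne hkp] at hk; exact w2 k hk
  · intro k hk
    rcases eq_or_ne k p with rfl | hkp
    · rw [Function.update_self] at hk; rcases hX with rfl | rfl <;> cases hk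
    · rw [Function.update_of_ne hkp] at hk; exact w3 k hk
  · intro k hk
    rcases eq_or_ne k p with rfl | hkp
    · exact w4 k (hold.imp id Or.inl)
    · rw [Function.update_of_ne hkp] at hk; exact w4 k hk
  · intro k l hk hl
    rcases eq_or_ne k p with rfl | hkp
    · rcases eq_or_ne l k with rfl | hlp
      · rfl
      · rw [Function.update_of_ne hlp] at hl
        exact (w5 l _ hl holdE).symm
    · rw [Function.update_of_ne hkp] at hk
      rcases eq_or_ne l p with rfl | hlp
      · exact w5 k _ hk holdE
      · rw [Function.update_of_ne hlp] at hl
        exact w5 k l hk hl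

end SymProof
namespace SymProof
open Sym
variable {N : ℕ}

/-- Generic preservation lemma for the transitions inside the candidate scan
(`s33 → s34`, `s34 → s34/s341/s35`, `s341 → s34`). -/
lemma inv_scan {s : St N} (H : Inv s) (p : Fin N) (X : PC) (C NC : ℕ)
    (M : Fin N → ℤ)
    (hX : X = .s34 ∨ X = .s341 ∨ X = .s35)
    (hold : CFp (s.pc p))
    (hsc : C ≤ p.val → 1 ≤ NC)
    (hkey : ∀ l, l ≠ p → ex X C l.val → ex (s.pc l) (s.cnt l) p.val →
      good X C NC p.val ∨ good (s.pc l) (s.cnt l) (s.nCand l) l.val) :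
    Inv { s with nCand := Function.update s.nCand p NC,
                 minCand := M,
                 cnt := Function.update s.cnt p C,
                 pc := Function.update s.pc p X } := by
  obtain ⟨i1, sc, b1, pr, w1, w2, w3, w4, w5⟩ := H
  refine ⟨?_, ?_, ?_, ?_, ?_, ?_, ?_, ?_, ?_⟩
  all_goals dsimp only
  · intro k hk
    rcases eq_or_ne k p with rfl | hkp
    · exact i1 k hold
    · rw [Function.update_of_ne hkp] at hk; exact i1 k hk
  · intro k hk hc
    rcases eq_or_ne k p with rfl | hkp
    · rw [Function.update_self] at hc ⊢; exact hsc hc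
    · rw [Function.update_of_ne hkp] at hk hc ⊢; exact sc k hk hc
  · intro k hk
    rcases eq_or_ne k p with rfl | hkp
    · rw [Function.update_self] at hk
      rcases hX with rfl | rfl | rfl <;> rcases hk with e | e <;> cases e
    · rw [Function.update_of_ne hkp] at hk ⊢; exact b1 k hk
  · intro k l hkl e1 e2
    rcases eq_or_ne k p with rfl | hkp
    · rw [Function.update_self, Function.update_self] at e1
      have hlp : l ≠ k := Ne.symm hkl
      simp only [Function.update_of_ne hlp] at e2
      simp only [Function.update_self, Function.update_of_ne hlp]
      exact hkey l hlp e1 e2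
    · rcases eq_or_ne l p with rfl | hlp
      · rw [Function.update_self, Function.update_self] at e2
        simp only [Function.update_of_ne hkp] at e1
        simp only [Function.update_self, Function.update_of_ne hkp]
        exact (hkey k hkp e2 e1).symm
      · simp only [Function.update_of_ne hkp, Function.update_of_ne hlp] at e1 e2 ⊢
        exact pr k l hkl e1 e2
  · intro k hk
    rcases eq_or_ne k p with rfl | hkp
    · rw [Function.update_self] at hk
      rcases hX with rfl | rfl | rfl <;> cases hk
    · rw [Function.update_of_ne hkp] at hk; exact w1 k hk
  · intro k hk
    rcases eq_or_ne k p with rfl | hkp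
    · rw [Function.update_self] at hk
      rcases hX with rfl | rfl | rfl <;> cases hk
    · rw [Function.update_of_ne hkp] at hk; exact w2 k hk
  · intro k hk
    rcases eq_or_ne k p with rfl | hkp
    · rw [Function.update_self] at hk
      rcases hX with rfl | rfl | rfl <;> cases hk
    · rw [Function.update_of_ne hkp] at hk; exact w3 k hk
  · intro k hk
    rcases eq_or_ne k p with rfl | hkp
    · rw [Function.update_self] at hk
      rcases hX with rfl | rfl | rfl <;> rcases hk with e | e | e <;> cases e
    · rw [Function.update_of_ne hkp] at hk; exact w4 k hk
  · intro k l hk hl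
    rcases eq_or_ne k p with rfl | hkp
    · rw [Function.update_self] at hk
      rcases hX with rfl | rfl | rfl <;> rcases hk with e | e | e | e <;> cases e
    · rcases eq_or_ne l p with rfl | hlp
      · rw [Function.update_self] at hl
        rcases hX with rfl | rfl | rfl <;> rcases hl with e | e | e | e <;> cases e
      · rw [Function.update_of_ne hkp] at hk
        rw [Function.update_of_ne hlp] at hl
        exact w5 k l hk hl

end SymProof
namespace SymProof
open Sym
variable {N : ℕ}

lemma cnt1_s34 (n : ℕ) : cnt1 .s34 n = n := rfl
lemma cnt1_s341 (n : ℕ) : cnt1 .s341 n = n + 1 := rfl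
lemma cnt1_s35 (n : ℕ) : cnt1 .s35 n = n := rfl
lemma cnt1_s351 (n : ℕ) : cnt1 .s351 n = n := rfl
lemma cnt1_s352 (n : ℕ) : cnt1 .s352 n = n := rfl
lemma ex_s34 (c k : ℕ) : ex .s34 c k ↔ c ≤ k := by simp [ex]
lemma ex_s341 (c k : ℕ) : ex .s341 c k ↔ c - 1 ≤ k := by simp [ex]
lemma ex_s35 (c k : ℕ) : ex .s35 c k ↔ True := by simp [ex]
lemma ex_s351 (c k : ℕ) : ex .s351 c k ↔ True := by simp [ex]
lemma ex_s352 (c k : ℕ) : ex .s352 c k ↔ True := by simp [ex]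

lemma inv_step {p : Fin N} {s s' : St N} (hs : Step p s s') (H : Inv s) : Inv s' := by
  cases hs with
  | t1 _ _ h =>
    exact inv_boring H p .s2 .waiting (Or.inr (by simp [CFp])) (by simp [ExtCS])
      (fun hc => absurd hc (by simp [CFp]))
  | t2free _ _ h ht =>
    have := inv_boring H p .s3 (s.flag p) (Or.inr (by simp [CFp])) (by simp [ExtCS])
      (fun hc => absurd hc (by simp [CFp]))
    rwa [Function.update_eq_self] at this
  | t2id _ _ _ h ht =>
    have := inv_boring H p .s4 (s.flag p) (Or.inr (by simp [CFp])) (by simp [ExtCS])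
      (fun hc => absurd hc (by simp [CFp]))
    rwa [Function.update_eq_self] at this
  | t3 _ _ h =>
    exact inv_boring H p .s32 .candidate (Or.inr (by simp [CFp])) (by simp [ExtCS])
      (fun hc => absurd hc (by simp [CFp]))
  | t32enter _ _ h ht hf =>
    have := inv_boring H p .s33 (s.flag p) (Or.inl rfl) (by simp [ExtCS]) (fun _ => hf)
    rwa [Function.update_eq_self] at this
  | t32exit _ _ h hc =>
    have := inv_boring H p .s37 (s.flag p) (Or.inr (by simp [CFp])) (by simp [ExtCS])
      (fun hc => absurd hc (by simp [CFp]))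
    rwa [Function.update_eq_self] at this
  | t35no _ _ h hc =>
    have := inv_boring H p .s36 (s.flag p) (Or.inr (by simp [CFp])) (by simp [ExtCS])
      (fun hc => absurd hc (by simp [CFp]))
    rwa [Function.update_eq_self] at this
  | t352 _ _ h =>
    have := inv_boring H p .s36 (s.flag p) (Or.inr (by simp [CFp])) (by simp [ExtCS])
      (fun hc => absurd hc (by simp [CFp]))
    rwa [Function.update_eq_self] at this
  | t36yes _ _ h hc =>
    exact inv_boring H p .s32 .waiting (Or.inr (by simp [CFp])) (by simp [ExtCS])
      (fun hc => absurd hc (by simp [CFp]))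
  | t36no _ _ h hc =>
    have := inv_boring H p .s32 (s.flag p) (Or.inr (by simp [CFp])) (by simp [ExtCS])
      (fun hc => absurd hc (by simp [CFp]))
    rwa [Function.update_eq_self] at this
  | t37 _ _ h =>
    exact inv_boring H p .s4 .waiting (Or.inr (by simp [CFp])) (by simp [ExtCS])
      (fun hc => absurd hc (by simp [CFp]))
  | t5 _ _ h =>
    exact inv_inD H p .s6 .remainder (Function.update s.nextTurn p .thinking) 0
      (Or.inl rfl) (Or.inl h)
  | t6exit _ _ h hc =>
    have := inv_inD H p .s63 (s.flag p) s.nextTurn (s.cnt p) (Or.inr rfl) (Or.inr h)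
    rwa [Function.update_eq_self, Function.update_eq_self] at this
  | t6found _ _ h hnt hcnt hf =>
    have := inv_inD H p .s6 (s.flag p)
      (Function.update s.nextTurn p (.id (nxt p (s.cnt p)))) (s.cnt p + 1)
      (Or.inl rfl) (Or.inr h)
    rwa [Function.update_eq_self] at this
  | t6notfound _ _ h hnt hcnt hf =>
    have := inv_inD H p .s6 (s.flag p) s.nextTurn (s.cnt p + 1) (Or.inl rfl) (Or.inr h)
    rwa [Function.update_eq_self] at this
  | t33 _ _ h =>
    refine inv_scan H p .s34 N 0 _ (Or.inl rfl) (by simp [CFp, h])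
      (fun hC => absurd hC (Nat.not_le.mpr p.isLt)) ?_
    intro l hlp e1 e2
    exfalso
    rcases e1 with ⟨_, hle⟩ | ⟨e, _⟩ | e | e | e
    · exact absurd hle (Nat.not_le.mpr l.isLt)
    all_goals cases e
  | t34done _ _ h hc =>
    obtain ⟨i1, sc, b1, pr, w1, w2, w3, w4, w5⟩ := H
    have key : ∀ l, l ≠ p → ex .s35 (s.cnt p) l.val → ex (s.pc l) (s.cnt l) p.val →
        good .s35 (s.cnt p) (s.nCand p) p.val ∨ good (s.pc l) (s.cnt l) (s.nCand l) l.val := by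
      intro l hlp e1 e2
      have old := pr p l (Ne.symm hlp) (Or.inl ⟨h, by omega⟩) e2
      rcases old with g | g
      · left
        rw [h] at g
        simp only [good, ex_s34, ex_s35, cnt1_s34, cnt1_s35] at g ⊢
        omega
      · exact Or.inr g
    have := inv_scan ⟨i1, sc, b1, pr, w1, w2, w3, w4, w5⟩ p .s35 (s.cnt p) (s.nCand p)
      s.minCand (Or.inr (Or.inr rfl)) (by simp [CFp, h]) (fun _ => sc p (Or.inl h) (by omega)) key
    rwa [Function.update_eq_self, Function.update_eq_self] at this
  | t34cand _ _ j0 h hc hj hf =>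
    obtain ⟨i1, sc, b1, pr, w1, w2, w3, w4, w5⟩ := H
    have key : ∀ l, l ≠ p → ex .s341 (s.cnt p) l.val → ex (s.pc l) (s.cnt l) p.val →
        good .s341 (s.cnt p) (s.nCand p) p.val ∨ good (s.pc l) (s.cnt l) (s.nCand l) l.val := by
      intro l hlp e1 e2
      have hle : s.cnt p - 1 ≤ l.val := by
        rcases e1 with ⟨e, _⟩ | ⟨_, hle⟩ | e | e | e
        · cases e
        · exact hle
        all_goals cases e
      by_cases hcl : s.cnt p ≤ l.val
      · have old := pr p l (Ne.symm hlp) (Or.inl ⟨h, hcl⟩) e2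
        rcases old with g | g
        · left
          rw [h] at g
          simp only [good, ex_s34, ex_s341, cnt1_s34, cnt1_s341] at g ⊢
          omega
        · exact Or.inr g
      · left
        have hvne : l.val ≠ p.val := fun hv => hlp (Fin.ext hv)
        simp only [good, ex_s341, cnt1_s341]
        rcases Nat.lt_or_ge p.val (s.cnt p) with hpc | hpc
        · omega
        · have h1 := sc p (Or.inl h) hpc
          omega
    have := inv_scan ⟨i1, sc, b1, pr, w1, w2, w3, w4, w5⟩ p .s341 (s.cnt p) (s.nCand p)
      s.minCand (Or.inr (Or.inl rfl)) (by simp [CFp, h]) (fun hC => sc p (Or.inl h) hC) key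
    rwa [Function.update_eq_self, Function.update_eq_self] at this
  | t34nocand _ _ j0 h hc hj hf =>
    obtain ⟨i1, sc, b1, pr, w1, w2, w3, w4, w5⟩ := H
    have hpj : p ≠ j0 := fun e => hf (by rw [← e]; exact i1 p (by simp [CFp, h]))
    have hpv : p.val ≠ s.cnt p - 1 := by
      rw [← hj]; exact fun hv => hpj (Fin.ext hv)
    have key : ∀ l, l ≠ p → ex .s34 (s.cnt p - 1) l.val → ex (s.pc l) (s.cnt l) p.val →
        good .s34 (s.cnt p - 1) (s.nCand p) p.val ∨ good (s.pc l) (s.cnt l) (s.nCand l) l.val := by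
      intro l hlp e1 e2
      have hle : s.cnt p - 1 ≤ l.val := by
        rcases e1 with ⟨_, hle⟩ | ⟨e, _⟩ | e | e | e
        · exact hle
        all_goals cases e
      have hlj : l ≠ j0 := fun e => hf (by rw [← e]; exact i1 l (cfp_of_ex e2))
      have hlv : l.val ≠ s.cnt p - 1 := by
        rw [← hj]; exact fun hv => hlj (Fin.ext hv)
      have old := pr p l (Ne.symm hlp) (Or.inl ⟨h, by omega⟩) e2
      rcases old with g | g
      · left
        rw [h] at g
        refine ⟨g.1, fun hx => ?_⟩
        have hxle : s.cnt p - 1 ≤ p.val := by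
          rcases hx with ⟨_, hle'⟩ | ⟨e, _⟩ | e | e | e
          · exact hle'
          all_goals cases e
        exact g.2 (Or.inl ⟨rfl, by omega⟩)
      · exact Or.inr g
    have hsc : s.cnt p - 1 ≤ p.val → 1 ≤ s.nCand p := fun hC => sc p (Or.inl h) (by omega)
    have := inv_scan ⟨i1, sc, b1, pr, w1, w2, w3, w4, w5⟩ p .s34 (s.cnt p - 1) (s.nCand p)
      s.minCand (Or.inl rfl) (by simp [CFp, h]) hsc key
    rwa [Function.update_eq_self] at this
  | t341 _ _ h =>
    obtain ⟨i1, sc, b1, pr, w1, w2, w3, w4, w5⟩ := H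
    have key : ∀ l, l ≠ p → ex .s34 (s.cnt p - 1) l.val → ex (s.pc l) (s.cnt l) p.val →
        good .s34 (s.cnt p - 1) (s.nCand p + 1) p.val ∨
          good (s.pc l) (s.cnt l) (s.nCand l) l.val := by
      intro l hlp e1 e2
      have hle : s.cnt p - 1 ≤ l.val := by
        rcases e1 with ⟨_, hle⟩ | ⟨e, _⟩ | e | e | e
        · exact hle
        all_goals cases e
      have old := pr p l (Ne.symm hlp) (Or.inr (Or.inl ⟨h, hle⟩)) e2
      rcases old with g | g
      · left
        rw [h] at g
        simp only [good, ex_s341, ex_s34, cnt1_s341, cnt1_s34] at g ⊢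
        omega
      · exact Or.inr g
    exact inv_scan ⟨i1, sc, b1, pr, w1, w2, w3, w4, w5⟩ p .s34 (s.cnt p - 1) (s.nCand p + 1)
      _ (Or.inl rfl) (by simp [CFp, h]) (fun _ => by omega) key
  | t35yes _ _ h ht hn =>
    obtain ⟨i1, sc, b1, pr, w1, w2, w3, w4, w5⟩ := H
    refine ⟨?_, ?_, ?_, ?_, ?_, ?_, ?_, ?_, ?_⟩
    all_goals dsimp only
    · intro k hk
      rcases eq_or_ne k p with rfl | hkp
      · exact i1 k (by simp [CFp, h])
      · rw [Function.update_of_ne hkp] at hk; exact i1 k hk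
    · intro k hk hc
      rcases eq_or_ne k p with rfl | hkp
      · rw [Function.update_self] at hk; rcases hk with e | e <;> cases e
      · rw [Function.update_of_ne hkp] at hk; exact sc k hk hc
    · intro k hk
      rcases eq_or_ne k p with rfl | hkp
      · exact hn
      · rw [Function.update_of_ne hkp] at hk; exact b1 k hk
    · intro k l hkl e1 e2
      rcases eq_or_ne k p with rfl | hkp
      · have hlp : l ≠ k := Ne.symm hkl
        rw [Function.update_of_ne hlp] at e2 ⊢
        have old := pr k l hkl (by rw [h]; exact Or.inr (Or.inr (Or.inl rfl))) e2
        rcases old with g | g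
        · left
          rw [h] at g
          simp only [Function.update_self, good, ex_s35, ex_s351, ex_s352,
            cnt1_s35, cnt1_s351, cnt1_s352, true_implies] at g ⊢
          omega
        · exact Or.inr g
      · rcases eq_or_ne l p with rfl | hlp
        · rw [Function.update_of_ne hkp] at e1 ⊢
          have old := pr k l hkl e1 (by rw [h]; exact Or.inr (Or.inr (Or.inl rfl)))
          rcases old with g | g
          · exact Or.inl g
          · right
            rw [h] at g
            simp only [Function.update_self, good, ex_s35, ex_s351, ex_s352,
              cnt1_s35, cnt1_s351, cnt1_s352, true_implies] at g ⊢
            omega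
        · rw [Function.update_of_ne hkp] at e1 ⊢
          rw [Function.update_of_ne hlp] at e2
          rw [Function.update_of_ne hlp]
          exact pr k l hkl e1 e2
    · intro k hk; exact ht
    · intro k hk
      rcases eq_or_ne k p with rfl | hkp
      · rw [Function.update_self] at hk; try cases hk
      · rw [Function.update_of_ne hkp] at hk; exact w2 k hk
    · intro k hk
      rcases eq_or_ne k p with rfl | hkp
      · rw [Function.update_self] at hk; try cases hk
      · rw [Function.update_of_ne hkp] at hk; exact w3 k hk
    · intro k hk
      rcases eq_or_ne k p with rfl | hkp
      · rw [Function.update_self] at hk; rcases hk with e | e | e <;> cases e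
      · rw [Function.update_of_ne hkp] at hk; exact w4 k hk
    · intro k l hk hl
      rcases eq_or_ne k p with rfl | hkp
      · rw [Function.update_self] at hk; rcases hk with e | e | e | e <;> cases e
      · rcases eq_or_ne l p with rfl | hlp
        · rw [Function.update_self] at hl; rcases hl with e | e | e | e <;> cases e
        · rw [Function.update_of_ne hkp] at hk
          rw [Function.update_of_ne hlp] at hl
          exact w5 k l hk hl
  | t351 _ _ h =>
    obtain ⟨i1, sc, b1, pr, w1, w2, w3, w4, w5⟩ := H
    have hfree := w1 p h
    have noB : ∀ k, k ≠ p → s.pc k ≠ .s351 := by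
      intro k hkp e
      have old := pr p k (Ne.symm hkp)
        (by rw [h]; exact Or.inr (Or.inr (Or.inr (Or.inl rfl))))
        (by rw [e]; exact Or.inr (Or.inr (Or.inr (Or.inl rfl))))
      rcases old with g | g
      · have h2 := g.2 (by rw [h]; exact Or.inr (Or.inr (Or.inr (Or.inl rfl))))
        rw [h] at h2
        simp only [cnt1_s351] at h2
        have := b1 p (Or.inl h)
        omega
      · have h2 := g.2 (by rw [e]; exact Or.inr (Or.inr (Or.inr (Or.inl rfl))))
        rw [e] at h2
        simp only [cnt1_s351] at h2
        have := b1 k (Or.inl e)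
        omega
    refine ⟨?_, ?_, ?_, ?_, ?_, ?_, ?_, ?_, ?_⟩
    all_goals dsimp only
    · intro k hk
      rcases eq_or_ne k p with rfl | hkp
      · exact i1 k (by simp [CFp, h])
      · rw [Function.update_of_ne hkp] at hk; exact i1 k hk
    · intro k hk hc
      rcases eq_or_ne k p with rfl | hkp
      · rw [Function.update_self] at hk; rcases hk with e | e <;> cases e
      · rw [Function.update_of_ne hkp] at hk; exact sc k hk hc
    · intro k hk
      rcases eq_or_ne k p with rfl | hkp
      · exact b1 k (Or.inl h)
      · rw [Function.update_of_ne hkp] at hk; exact b1 k hk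
    · intro k l hkl e1 e2
      rcases eq_or_ne k p with rfl | hkp
      · have hlp : l ≠ k := Ne.symm hkl
        rw [Function.update_of_ne hlp] at e2 ⊢
        have old := pr k l hkl (by rw [h]; exact Or.inr (Or.inr (Or.inr (Or.inl rfl)))) e2
        rcases old with g | g
        · left
          rw [h] at g
          simp only [Function.update_self, good, ex_s35, ex_s351, ex_s352,
            cnt1_s35, cnt1_s351, cnt1_s352, true_implies] at g ⊢
          omega
        · exact Or.inr g
      · rcases eq_or_ne l p with rfl | hlp
        · rw [Function.update_of_ne hkp] at e1 ⊢
          have old := pr k l hkl e1 (by rw [h]; exact Or.inr (Or.inr (Or.inr (Or.inl rfl))))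
          rcases old with g | g
          · exact Or.inl g
          · right
            rw [h] at g
            simp only [Function.update_self, good, ex_s35, ex_s351, ex_s352,
              cnt1_s35, cnt1_s351, cnt1_s352, true_implies] at g ⊢
            omega
        · rw [Function.update_of_ne hkp] at e1 ⊢
          rw [Function.update_of_ne hlp] at e2
          rw [Function.update_of_ne hlp]
          exact pr k l hkl e1 e2
    · intro k hk
      rcases eq_or_ne k p with rfl | hkp
      · rw [Function.update_self] at hk; try cases hk
      · rw [Function.update_of_ne hkp] at hk; exact absurd hk (noB k hkp)
    · intro k hk
      rcases eq_or_ne k p with rfl | hkp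
      · rfl
      · rw [Function.update_of_ne hkp] at hk
        have := w2 k hk
        rw [hfree] at this
        try cases this
    · intro k hk
      rcases eq_or_ne k p with rfl | hkp
      · rw [Function.update_self] at hk; try cases hk
      · rw [Function.update_of_ne hkp] at hk
        have := w3 k hk
        rw [hfree] at this
        try cases this
    · intro k hk
      rcases eq_or_ne k p with rfl | hkp
      · rw [Function.update_self] at hk; rcases hk with e | e | e <;> cases e
      · rw [Function.update_of_ne hkp] at hk
        have := w4 k hk
        rw [hfree] at this
        try cases this
    · intro k l hk hl
      rcases eq_or_ne k p with rfl | hkp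
      · rw [Function.update_self] at hk; rcases hk with e | e | e | e <;> cases e
      · rcases eq_or_ne l p with rfl | hlp
        · rw [Function.update_self] at hl; rcases hl with e | e | e | e <;> cases e
        · rw [Function.update_of_ne hkp] at hk
          rw [Function.update_of_ne hlp] at hl
          exact w5 k l hk hl
  | t4 _ _ h ht =>
    obtain ⟨i1, sc, b1, pr, w1, w2, w3, w4, w5⟩ := H
    refine ⟨?_, ?_, ?_, ?_, ?_, ?_, ?_, ?_, ?_⟩
    all_goals dsimp only
    · intro k hk
      rcases eq_or_ne k p with rfl | hkp
      · rw [Function.update_self] at hk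
        rcases hk with e | e | e | e | e | e <;> cases e
      · rw [Function.update_of_ne hkp] at hk; exact i1 k hk
    · intro k hk hc
      rcases eq_or_ne k p with rfl | hkp
      · rw [Function.update_self] at hk; rcases hk with e | e <;> cases e
      · rw [Function.update_of_ne hkp] at hk; exact sc k hk hc
    · intro k hk
      rcases eq_or_ne k p with rfl | hkp
      · rw [Function.update_self] at hk; rcases hk with e | e <;> cases e
      · rw [Function.update_of_ne hkp] at hk; exact b1 k hk
    · intro k l hkl e1 e2
      rcases eq_or_ne k p with rfl | hkp
      · rw [Function.update_self] at e1
        exfalso; rcases e1 with ⟨e, _⟩ | ⟨e, _⟩ | e | e | e <;> cases e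
      · rcases eq_or_ne l p with rfl | hlp
        · rw [Function.update_self] at e2
          exfalso; rcases e2 with ⟨e, _⟩ | ⟨e, _⟩ | e | e | e <;> cases e
        · rw [Function.update_of_ne hkp] at e1 ⊢
          rw [Function.update_of_ne hlp] at e2
          rw [Function.update_of_ne hlp]
          exact pr k l hkl e1 e2
    · intro k hk
      rcases eq_or_ne k p with rfl | hkp
      · rw [Function.update_self] at hk; try cases hk
      · rw [Function.update_of_ne hkp] at hk; exact w1 k hk
    · intro k hk
      rcases eq_or_ne k p with rfl | hkp
      · rw [Function.update_self] at hk; try cases hk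
      · rw [Function.update_of_ne hkp] at hk; exact w2 k hk
    · intro k hk
      rcases eq_or_ne k p with rfl | hkp
      · exact ht
      · rw [Function.update_of_ne hkp] at hk
        have := w3 k hk
        rw [ht] at this
        exact absurd (Turn.id.inj this).symm hkp
    · intro k hk
      rcases eq_or_ne k p with rfl | hkp
      · rw [Function.update_self] at hk; rcases hk with e | e | e <;> cases e
      · rw [Function.update_of_ne hkp] at hk; exact w4 k hk
    · intro k l hk hl
      rcases eq_or_ne k p with rfl | hkp
      · rcases eq_or_ne l k with rfl | hlp
        · rfl
        · rw [Function.update_of_ne hlp] at hl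
          rcases hl with e | e | e | e
          · have := w3 l e; rw [ht] at this; exact (Turn.id.inj this)
          all_goals (have := w4 l (by simp [e]); rw [ht] at this; try cases this)
      · rcases eq_or_ne l p with rfl | hlp
        · rw [Function.update_of_ne hkp] at hk
          rcases hk with e | e | e | e
          · have := w3 k e; rw [ht] at this; exact (Turn.id.inj this).symm
          all_goals (have := w4 k (by simp [e]); rw [ht] at this; try cases this)
        · rw [Function.update_of_ne hkp] at hk
          rw [Function.update_of_ne hlp] at hl
          exact w5 k l hk hl
  | tcs _ _ h =>
    obtain ⟨i1, sc, b1, pr, w1, w2, w3, w4, w5⟩ := H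
    have hid := w3 p h
    refine ⟨?_, ?_, ?_, ?_, ?_, ?_, ?_, ?_, ?_⟩
    all_goals dsimp only
    · intro k hk
      rcases eq_or_ne k p with rfl | hkp
      · rw [Function.update_self] at hk
        rcases hk with e | e | e | e | e | e <;> cases e
      · rw [Function.update_of_ne hkp] at hk; exact i1 k hk
    · intro k hk hc
      rcases eq_or_ne k p with rfl | hkp
      · rw [Function.update_self] at hk; rcases hk with e | e <;> cases e
      · rw [Function.update_of_ne hkp] at hk; exact sc k hk hc
    · intro k hk
      rcases eq_or_ne k p with rfl | hkp
      · rw [Function.update_self] at hk; rcases hk with e | e <;> cases e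
      · rw [Function.update_of_ne hkp] at hk; exact b1 k hk
    · intro k l hkl e1 e2
      rcases eq_or_ne k p with rfl | hkp
      · rw [Function.update_self] at e1
        exfalso; rcases e1 with ⟨e, _⟩ | ⟨e, _⟩ | e | e | e <;> cases e
      · rcases eq_or_ne l p with rfl | hlp
        · rw [Function.update_self] at e2
          exfalso; rcases e2 with ⟨e, _⟩ | ⟨e, _⟩ | e | e | e <;> cases e
        · rw [Function.update_of_ne hkp] at e1 ⊢
          rw [Function.update_of_ne hlp] at e2
          rw [Function.update_of_ne hlp]
          exact pr k l hkl e1 e2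
    · intro k hk
      rcases eq_or_ne k p with rfl | hkp
      · rw [Function.update_self] at hk; try cases hk
      · rw [Function.update_of_ne hkp] at hk
        have := w1 k hk; rw [hid] at this; try cases this
    · intro k hk
      rcases eq_or_ne k p with rfl | hkp
      · rw [Function.update_self] at hk; try cases hk
      · rw [Function.update_of_ne hkp] at hk
        have := w2 k hk; rw [hid] at this
        exact absurd (Turn.id.inj this).symm hkp
    · intro k hk
      rcases eq_or_ne k p with rfl | hkp
      · rw [Function.update_self] at hk; try cases hk
      · rw [Function.update_of_ne hkp] at hk
        have := w3 k hk; rw [hid] at this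
        exact absurd (Turn.id.inj this).symm hkp
    · intro k hk
      rfl
    · intro k l hk hl
      rcases eq_or_ne k p with rfl | hkp
      · rcases eq_or_ne l k with rfl | hlp
        · rfl
        · rw [Function.update_of_ne hlp] at hl
          rcases hl with e | e | e | e
          · have := w3 l e; rw [hid] at this; exact (Turn.id.inj this)
          all_goals (have := w4 l (by simp [e]); rw [hid] at this; try cases this)
      · rcases eq_or_ne l p with rfl | hlp
        · rw [Function.update_of_ne hkp] at hk
          rcases hk with e | e | e | e
          · have := w3 k e; rw [hid] at this; exact (Turn.id.inj this).symm
          all_goals (have := w4 k (by simp [e]); rw [hid] at this; try cases this)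
        · rw [Function.update_of_ne hkp] at hk
          rw [Function.update_of_ne hlp] at hl
          exact w5 k l hk hl
  | t63free _ _ h hn =>
    obtain ⟨i1, sc, b1, pr, w1, w2, w3, w4, w5⟩ := H
    have hth := w4 p (Or.inr (Or.inr h))
    have hpE : ExtCS (s.pc p) := by rw [h]; exact Or.inr (Or.inr (Or.inr rfl))
    refine ⟨?_, ?_, ?_, ?_, ?_, ?_, ?_, ?_, ?_⟩
    all_goals dsimp only
    · intro k hk
      rcases eq_or_ne k p with rfl | hkp
      · rw [Function.update_self] at hk
        rcases hk with e | e | e | e | e | e <;> cases e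
      · rw [Function.update_of_ne hkp] at hk; exact i1 k hk
    · intro k hk hc
      rcases eq_or_ne k p with rfl | hkp
      · rw [Function.update_self] at hk; rcases hk with e | e <;> cases e
      · rw [Function.update_of_ne hkp] at hk; exact sc k hk hc
    · intro k hk
      rcases eq_or_ne k p with rfl | hkp
      · rw [Function.update_self] at hk; rcases hk with e | e <;> cases e
      · rw [Function.update_of_ne hkp] at hk; exact b1 k hk
    · intro k l hkl e1 e2
      rcases eq_or_ne k p with rfl | hkp
      · rw [Function.update_self] at e1
        exfalso; rcases e1 with ⟨e, _⟩ | ⟨e, _⟩ | e | e | e <;> cases e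
      · rcases eq_or_ne l p with rfl | hlp
        · rw [Function.update_self] at e2
          exfalso; rcases e2 with ⟨e, _⟩ | ⟨e, _⟩ | e | e | e <;> cases e
        · rw [Function.update_of_ne hkp] at e1 ⊢
          rw [Function.update_of_ne hlp] at e2
          rw [Function.update_of_ne hlp]
          exact pr k l hkl e1 e2
    · intro k hk
      rfl
    · intro k hk
      rcases eq_or_ne k p with rfl | hkp
      · rw [Function.update_self] at hk; try cases hk
      · rw [Function.update_of_ne hkp] at hk
        have := w2 k hk; rw [hth] at this; try cases this
    · intro k hk
      rcases eq_or_ne k p with rfl | hkp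
      · rw [Function.update_self] at hk; try cases hk
      · rw [Function.update_of_ne hkp] at hk
        have := w3 k hk; rw [hth] at this; try cases this
    · intro k hk
      rcases eq_or_ne k p with rfl | hkp
      · rw [Function.update_self] at hk; rcases hk with e | e | e <;> cases e
      · rw [Function.update_of_ne hkp] at hk
        exact absurd (w5 k p (Or.inr hk) hpE) hkp
    · intro k l hk hl
      rcases eq_or_ne k p with rfl | hkp
      · rw [Function.update_self] at hk
        rcases hk with e | e | e | e <;> cases e
      · rcases eq_or_ne l p with rfl | hlp
        · rw [Function.update_self] at hl
          rcases hl with e | e | e | e <;> cases e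
        · rw [Function.update_of_ne hkp] at hk
          rw [Function.update_of_ne hlp] at hl
          exact w5 k l hk hl
  | t63id _ _ b h hn =>
    obtain ⟨i1, sc, b1, pr, w1, w2, w3, w4, w5⟩ := H
    have hth := w4 p (Or.inr (Or.inr h))
    have hpE : ExtCS (s.pc p) := by rw [h]; exact Or.inr (Or.inr (Or.inr rfl))
    refine ⟨?_, ?_, ?_, ?_, ?_, ?_, ?_, ?_, ?_⟩
    all_goals dsimp only
    · intro k hk
      rcases eq_or_ne k p with rfl | hkp
      · rw [Function.update_self] at hk
        rcases hk with e | e | e | e | e | e <;> cases e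
      · rw [Function.update_of_ne hkp] at hk; exact i1 k hk
    · intro k hk hc
      rcases eq_or_ne k p with rfl | hkp
      · rw [Function.update_self] at hk; rcases hk with e | e <;> cases e
      · rw [Function.update_of_ne hkp] at hk; exact sc k hk hc
    · intro k hk
      rcases eq_or_ne k p with rfl | hkp
      · rw [Function.update_self] at hk; rcases hk with e | e <;> cases e
      · rw [Function.update_of_ne hkp] at hk; exact b1 k hk
    · intro k l hkl e1 e2
      rcases eq_or_ne k p with rfl | hkp
      · rw [Function.update_self] at e1
        exfalso; rcases e1 with ⟨e, _⟩ | ⟨e, _⟩ | e | e | e <;> cases e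
      · rcases eq_or_ne l p with rfl | hlp
        · rw [Function.update_self] at e2
          exfalso; rcases e2 with ⟨e, _⟩ | ⟨e, _⟩ | e | e | e <;> cases e
        · rw [Function.update_of_ne hkp] at e1 ⊢
          rw [Function.update_of_ne hlp] at e2
          rw [Function.update_of_ne hlp]
          exact pr k l hkl e1 e2
    · intro k hk
      rcases eq_or_ne k p with rfl | hkp
      · rw [Function.update_self] at hk; try cases hk
      · rw [Function.update_of_ne hkp] at hk
        have := w1 k hk; rw [hth] at this; try cases this
    · intro k hk
      rcases eq_or_ne k p with rfl | hkp
      · rw [Function.update_self] at hk; try cases hk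
      · rw [Function.update_of_ne hkp] at hk
        have := w2 k hk; rw [hth] at this; try cases this
    · intro k hk
      rcases eq_or_ne k p with rfl | hkp
      · rw [Function.update_self] at hk; try cases hk
      · rw [Function.update_of_ne hkp] at hk
        have := w3 k hk; rw [hth] at this; try cases this
    · intro k hk
      rcases eq_or_ne k p with rfl | hkp
      · rw [Function.update_self] at hk; rcases hk with e | e | e <;> cases e
      · rw [Function.update_of_ne hkp] at hk
        exact absurd (w5 k p (Or.inr hk) hpE) hkp
    · intro k l hk hl
      rcases eq_or_ne k p with rfl | hkp
      · rw [Function.update_self] at hk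
        rcases hk with e | e | e | e <;> cases e
      · rcases eq_or_ne l p with rfl | hlp
        · rw [Function.update_self] at hl
          rcases hl with e | e | e | e <;> cases e
        · rw [Function.update_of_ne hkp] at hk
          rw [Function.update_of_ne hlp] at hl
          exact w5 k l hk hl

lemma reach_inv {s : St N} (hs : Reachable s) : Inv s := by
  obtain ⟨e, n, rfl⟩ := hs
  induction n with
  | zero => rw [e.init]; exact inv_init
  | succ n ih =>
    have hst := e.step n
    cases hsched : e.sched n with
    | none => rw [hsched] at hst; rw [hst]; exact ih
    | some i => rw [hsched] at hst; exact inv_step hst ih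

end SymProof

open Sym in
/-- **Mutual exclusion for the symmetric algorithm.**
In every reachable global state, no two distinct processes have their
program counters simultaneously at the critical section. -/
theorem sym_mutual_exclusion {N : ℕ} (s : St N) (hs : Reachable s)
    (i j : Fin N) (hi : s.pc i = PC.cs) (hj : s.pc j = PC.cs) : i = j := by
  have H := SymProof.reach_inv hs
  have h1 := H.w3 i hi
  have h2 := H.w3 j hj
  rw [h1] at h2
  cases h2
  rfl
end

section
/- For the symmetric algorithm: in every execution, if at some step the shared variable turn is assigned the value a (either by process a itself at state 3.5.2, or by some process setting turn:=nextTurn=a when moving to state 8), then no process changes the value of turn again before process a enters the critical section. -/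
namespace Sym

variable {N : ℕ}

/-- PC states of the candidate phase in which the process's flag is
necessarily `candidate`. -/
def CandSt (p : PC) : Prop :=
  p = .s33 ∨ p = .s34 ∨ p = .s341 ∨ p = .s35 ∨ p = .s351 ∨ p = .s352 ∨ p = .s36

/-- PC states of (or after) the candidate scan. -/
def ScanSt (p : PC) : Prop :=
  p = .s34 ∨ p = .s341 ∨ p = .s35 ∨ p = .s351 ∨ p = .s352

lemma scan_cand {p : PC} (h : ScanSt p) : CandSt p := by
  rcases h with h|h|h|h|h <;> simp [CandSt, h]

/-- Lower end of the set of indices already inspected by `q`'s scan. -/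
def low (s : St N) (q : Fin N) : ℕ :=
  if s.pc q = .s34 then s.cnt q else if s.pc q = .s341 then s.cnt q - 1 else 0

/-- Effective candidate count of `q` (including a pending increment at
state 3.4.1). -/
def cntd (s : St N) (q : Fin N) : ℕ :=
  s.nCand q + (if s.pc q = .s341 then 1 else 0)

/-- `q` has effectively counted a candidate other than itself. -/
def Dq (s : St N) (q : Fin N) : Prop :=
  (if low s q ≤ (q : ℕ) then 1 else 0) + 1 ≤ cntd s q

/-- The scan-related part of the global invariant. -/
def ScanOK (s : St N) : Prop :=
  (∀ q, CandSt (s.pc q) → s.flag q = .candidate) ∧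
  (∀ q, ScanSt (s.pc q) → low s q ≤ (q : ℕ) → 1 ≤ cntd s q) ∧
  (∀ q r, q ≠ r → ScanSt (s.pc q) → ScanSt (s.pc r) →
    low s q ≤ (r : ℕ) → low s r ≤ (q : ℕ) → Dq s q ∨ Dq s r) ∧
  (∀ q, s.pc q = .s351 ∨ s.pc q = .s352 → s.nCand q = 1)

/-- The turn-related part of the global invariant. -/
def TurnOK (s : St N) : Prop :=
  (s.turn = .free → ∀ q, ¬ ExtCS (s.pc q)) ∧
  (s.turn = .thinking → (∀ q, s.pc q ≠ .s351) ∧ (∀ q, s.pc q ≠ .cs) ∧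
    ∃ x : Fin N, ∀ q, ExtCS (s.pc q) → q = x) ∧
  (∀ x, s.turn = .id x → (∀ q, s.pc q ≠ .s351) ∧
    (∀ q, s.pc q ≠ .s5 ∧ s.pc q ≠ .s6 ∧ s.pc q ≠ .s63) ∧
    (∀ q, s.pc q = .cs → q = x))

def Inv (s : St N) : Prop := ScanOK s ∧ TurnOK s

lemma not_two_351 {s : St N} (hok : ScanOK s) {i q : Fin N} (hne : q ≠ i)
    (hi : s.pc i = .s351) (hq : s.pc q = .s351) : False := by
  obtain ⟨hF, hS, hM, hH⟩ := hok
  have h1 := hH i (Or.inl hi)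
  have h2 := hH q (Or.inl hq)
  have := hM q i hne (by simp [ScanSt, hq]) (by simp [ScanSt, hi])
    (by simp [low, hq]) (by simp [low, hi])
  rcases this with hD | hD <;> simp [Dq, low, cntd, hi, hq, h1, h2] at hD

lemma turn_free_of_351 {s : St N} (ht : TurnOK s) {i : Fin N}
    (hi : s.pc i = .s351) : s.turn = .free := by
  obtain ⟨hA, hB, hC⟩ := ht
  cases h : s.turn with
  | free => rfl
  | thinking => exact absurd hi ((hB h).1 i)
  | id x => exact absurd hi ((hC x h).1 i)

lemma turn_think_of_exit {s : St N} (ht : TurnOK s) {i : Fin N}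
    (hi : s.pc i = .s5 ∨ s.pc i = .s6 ∨ s.pc i = .s63) : s.turn = .thinking := by
  obtain ⟨hA, hB, hC⟩ := ht
  cases h : s.turn with
  | free => exact absurd (by rcases hi with h'|h'|h' <;> simp [ExtCS, h']) (hA h i)
  | thinking => rfl
  | id x =>
      rcases hi with h'|h'|h'
      exacts [absurd h' ((hC x h).2.1 i).1, absurd h' ((hC x h).2.1 i).2.1,
        absurd h' ((hC x h).2.1 i).2.2]

lemma turn_id_of_cs {s : St N} (ht : TurnOK s) {i : Fin N}
    (hi : s.pc i = .cs) : s.turn = .id i := by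
  obtain ⟨hA, hB, hC⟩ := ht
  cases h : s.turn with
  | free => exact absurd (Or.inl hi) (hA h i)
  | thinking => exact absurd hi ((hB h).2.1 i)
  | id x => rw [(hC x h).2.2 i hi]

/-- Congruence for `ScanOK` when process `i` leaves (or stays outside) the
scan states and no other process's relevant data changes. -/
lemma scanOK_congr {s s' : St N} (i : Fin N) (hok : ScanOK s)
    (hpc : ∀ q, q ≠ i → s'.pc q = s.pc q)
    (hscan : ¬ ScanSt (s'.pc i))
    (h351 : s'.pc i ≠ .s351 ∧ s'.pc i ≠ .s352)
    (hcand : CandSt (s'.pc i) → s'.flag i = .candidate)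
    (hflag : ∀ q, q ≠ i → s'.flag q = s.flag q)
    (hcnt : ∀ q, q ≠ i → s'.cnt q = s.cnt q)
    (hn : ∀ q, q ≠ i → s'.nCand q = s.nCand q) : ScanOK s' := by
  obtain ⟨hF, hS, hM, hH⟩ := hok
  have hlow : ∀ q, q ≠ i → low s' q = low s q := fun q hq => by
    simp [low, hpc q hq, hcnt q hq]
  have hcn : ∀ q, q ≠ i → cntd s' q = cntd s q := fun q hq => by
    simp [cntd, hpc q hq, hn q hq]
  have hD : ∀ q, q ≠ i → (Dq s' q ↔ Dq s q) := fun q hq => by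
    simp [Dq, hlow q hq, hcn q hq]
  refine ⟨?_, ?_, ?_, ?_⟩
  · intro q hq
    by_cases hqi : q = i
    · subst hqi; exact hcand hq
    · rw [hflag q hqi]; exact hF q (by rwa [hpc q hqi] at hq)
  · intro q hq
    by_cases hqi : q = i
    · subst hqi; exact absurd hq hscan
    · rw [hlow q hqi, hcn q hqi]
      exact hS q (by rwa [hpc q hqi] at hq)
  · intro q r hqr hq hr h1 h2
    by_cases hqi : q = i
    · subst hqi; exact absurd hq hscan
    by_cases hri : r = i
    · subst hri; exact absurd hr hscan
    rw [hD q hqi, hD r hri]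
    exact hM q r hqr (by rwa [hpc q hqi] at hq) (by rwa [hpc r hri] at hr)
      (by rwa [hlow q hqi] at h1) (by rwa [hlow r hri] at h2)
  · intro q hq
    by_cases hqi : q = i
    · subst hqi; rcases hq with h | h
      exacts [absurd h h351.1, absurd h h351.2]
    · rw [hn q hqi]; exact hH q (by rwa [hpc q hqi] at hq)

/-- Congruence for `ScanOK` when process `i` stays in the scan states with
unchanged `low` and `cntd`. -/
lemma scanOK_same {s s' : St N} (i : Fin N) (hok : ScanOK s)
    (hpc : ∀ q, q ≠ i → s'.pc q = s.pc q)
    (hflag : ∀ q, s'.flag q = s.flag q)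
    (hcnt : ∀ q, q ≠ i → s'.cnt q = s.cnt q)
    (hn : ∀ q, q ≠ i → s'.nCand q = s.nCand q)
    (hsi : ScanSt (s.pc i)) (hsi' : ScanSt (s'.pc i))
    (hlowi : low s' i = low s i) (hcdi : cntd s' i = cntd s i)
    (h351i : s'.pc i = .s351 ∨ s'.pc i = .s352 → s'.nCand i = 1) : ScanOK s' := by
  obtain ⟨hF, hS, hM, hH⟩ := hok
  have hlow : ∀ q, low s' q = low s q := fun q => by
    by_cases hq : q = i
    · subst hq; exact hlowi
    · simp [low, hpc q hq, hcnt q hq]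
  have hcn : ∀ q, cntd s' q = cntd s q := fun q => by
    by_cases hq : q = i
    · subst hq; exact hcdi
    · simp [cntd, hpc q hq, hn q hq]
  have hD : ∀ q, (Dq s' q ↔ Dq s q) := fun q => by simp [Dq, hlow q, hcn q]
  have hSc : ∀ q, ScanSt (s'.pc q) → ScanSt (s.pc q) := fun q hq => by
    by_cases hqi : q = i
    · subst hqi; exact hsi
    · rwa [hpc q hqi] at hq
  refine ⟨?_, ?_, ?_, ?_⟩
  · intro q hq
    by_cases hqi : q = i
    · subst hqi; rw [hflag]; exact hF _ (scan_cand hsi)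
    · rw [hflag]; exact hF q (by rwa [hpc q hqi] at hq)
  · intro q hq h1
    rw [hcn]
    exact hS q (hSc q hq) (by rwa [hlow q] at h1)
  · intro q r hqr hq hr h1 h2
    rw [hD q, hD r]
    exact hM q r hqr (hSc q hq) (hSc r hr)
      (by rwa [hlow q] at h1) (by rwa [hlow r] at h2)
  · intro q hq
    by_cases hqi : q = i
    · subst hqi; exact h351i hq
    · rw [hn q hqi]
      exact hH q (by rwa [hpc q hqi] at hq)

/-- Congruence for `TurnOK` when `turn` is unchanged and `i` moves to a
harmless PC state. -/
lemma turnOK_congr {s s' : St N} (i : Fin N) (hok : TurnOK s)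
    (hpc : ∀ q, q ≠ i → s'.pc q = s.pc q)
    (ht : s'.turn = s.turn)
    (hi : s'.pc i ≠ .s351 ∧ ¬ ExtCS (s'.pc i)) : TurnOK s' := by
  obtain ⟨hA, hB, hC⟩ := hok
  have hics : s'.pc i ≠ .cs := fun h => hi.2 (Or.inl h)
  have hi5 : s'.pc i ≠ .s5 := fun h => hi.2 (Or.inr (Or.inl h))
  have hi6 : s'.pc i ≠ .s6 := fun h => hi.2 (Or.inr (Or.inr (Or.inl h)))
  have hi63 : s'.pc i ≠ .s63 := fun h => hi.2 (Or.inr (Or.inr (Or.inr h)))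
  refine ⟨?_, ?_, ?_⟩
  · intro hf q
    by_cases hqi : q = i
    · subst hqi; exact hi.2
    · rw [hpc q hqi]; exact hA (ht ▸ hf) q
  · intro hf
    obtain ⟨h1, h2, x, hx⟩ := hB (ht ▸ hf)
    refine ⟨?_, ?_, x, ?_⟩
    · intro q; by_cases hqi : q = i
      · subst hqi; exact hi.1
      · rw [hpc q hqi]; exact h1 q
    · intro q; by_cases hqi : q = i
      · subst hqi; exact hics
      · rw [hpc q hqi]; exact h2 q
    · intro q hq; by_cases hqi : q = i
      · subst hqi; exact absurd hq hi.2
      · rw [hpc q hqi] at hq; exact hx q hq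
  · intro x hf
    obtain ⟨h1, h2, h3⟩ := hC x (ht ▸ hf)
    refine ⟨?_, ?_, ?_⟩
    · intro q; by_cases hqi : q = i
      · subst hqi; exact hi.1
      · rw [hpc q hqi]; exact h1 q
    · intro q; by_cases hqi : q = i
      · subst hqi; exact ⟨hi5, hi6, hi63⟩
      · rw [hpc q hqi]; exact h2 q
    · intro q hq; by_cases hqi : q = i
      · subst hqi; exact absurd hq hics
      · rw [hpc q hqi] at hq; exact h3 q hq

/-- `TurnOK` is preserved when the unique exiting process moves within the
exit region (turn stays `thinking`). -/
lemma turnOK_exit {s s' : St N} (i : Fin N) (hok : TurnOK s)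
    (hpc : ∀ q, q ≠ i → s'.pc q = s.pc q)
    (ht : s'.turn = s.turn)
    (hold : s.pc i = .s5 ∨ s.pc i = .s6 ∨ s.pc i = .s63)
    (hnew : s'.pc i = .s6 ∨ s'.pc i = .s63) : TurnOK s' := by
  have htk : s.turn = .thinking := turn_think_of_exit hok hold
  obtain ⟨hA, hB, hC⟩ := hok
  obtain ⟨h1, h2, x, hx⟩ := hB htk
  refine ⟨?_, ?_, ?_⟩
  · intro hf; rw [ht, htk] at hf; cases hf
  · intro _
    refine ⟨?_, ?_, x, ?_⟩
    · intro q; by_cases hqi : q = i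
      · subst hqi; rcases hnew with h | h <;> simp [h]
      · rw [hpc q hqi]; exact h1 q
    · intro q; by_cases hqi : q = i
      · subst hqi; rcases hnew with h | h <;> simp [h]
      · rw [hpc q hqi]; exact h2 q
    · intro q hq; by_cases hqi : q = i
      · subst hqi
        exact hx q (by rcases hold with h|h|h <;> simp [ExtCS, h])
      · rw [hpc q hqi] at hq; exact hx q hq
  · intro x' hf; rw [ht, htk] at hf; cases hf

/-- Preservation of the scan invariant by transition `t33`. -/
lemma scanOK_t33 {s s' : St N} (i : Fin N) (hok : ScanOK s)
    (hg : s.pc i = .s33)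
    (hpc : ∀ q, q ≠ i → s'.pc q = s.pc q) (hpci : s'.pc i = .s34)
    (hflag : ∀ q, s'.flag q = s.flag q)
    (hcnt : ∀ q, q ≠ i → s'.cnt q = s.cnt q) (hcnti : s'.cnt i = N)
    (hn : ∀ q, q ≠ i → s'.nCand q = s.nCand q) : ScanOK s' := by
  obtain ⟨hF, hS, hM, hH⟩ := hok
  have hlowi : low s' i = N := by simp [low, hpci, hcnti]
  have hlow : ∀ q, q ≠ i → low s' q = low s q := fun q hq => by
    simp [low, hpc q hq, hcnt q hq]
  have hcn : ∀ q, q ≠ i → cntd s' q = cntd s q := fun q hq => by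
    simp [cntd, hpc q hq, hn q hq]
  have hD : ∀ q, q ≠ i → (Dq s' q ↔ Dq s q) := fun q hq => by
    simp [Dq, hlow q hq, hcn q hq]
  refine ⟨?_, ?_, ?_, ?_⟩
  · intro q hq
    rw [hflag]
    rcases eq_or_ne q i with rfl | hqi
    · exact hF q (by simp [CandSt, hg])
    · exact hF q (by rwa [hpc q hqi] at hq)
  · intro q hq hle
    rcases eq_or_ne q i with rfl | hqi
    · rw [hlowi] at hle; have := q.isLt; omega
    · rw [hcn q hqi]
      exact hS q (by rwa [hpc q hqi] at hq) (by rwa [hlow q hqi] at hle)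
  · intro q r hqr hq hr h1 h2
    rcases eq_or_ne q i with rfl | hqi
    · rw [hlowi] at h1; have := r.isLt; omega
    rcases eq_or_ne r i with rfl | hri
    · rw [hlowi] at h2; have := q.isLt; omega
    rw [hD q hqi, hD r hri]
    exact hM q r hqr (by rwa [hpc q hqi] at hq) (by rwa [hpc r hri] at hr)
      (by rwa [hlow q hqi] at h1) (by rwa [hlow r hri] at h2)
  · intro q hq
    rcases eq_or_ne q i with rfl | hqi
    · rw [hpci] at hq; rcases hq with h | h <;> cases h
    · rw [hn q hqi]; exact hH q (by rwa [hpc q hqi] at hq)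

/-- Preservation of the scan invariant by transition `t34nocand`. -/
lemma scanOK_t34nocand {s s' : St N} {i j : Fin N} (hok : ScanOK s)
    (hg : s.pc i = .s34) (hc : s.cnt i ≠ 0) (hj : (j : ℕ) = s.cnt i - 1)
    (hf : s.flag j ≠ .candidate)
    (hpc : ∀ q, q ≠ i → s'.pc q = s.pc q) (hpci : s'.pc i = .s34)
    (hflag : ∀ q, s'.flag q = s.flag q)
    (hcnt : ∀ q, q ≠ i → s'.cnt q = s.cnt q) (hcnti : s'.cnt i = s.cnt i - 1)
    (hn : ∀ q, s'.nCand q = s.nCand q) : ScanOK s' := by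
  obtain ⟨hF, hS, hM, hH⟩ := hok
  have hji : j ≠ i := by
    intro e; subst e; exact hf (hF j (by simp [CandSt, hg]))
  have hiv : (i : ℕ) ≠ s.cnt i - 1 := by
    intro e; exact hji (Fin.ext (by omega))
  have hlowi' : low s' i = s.cnt i - 1 := by simp [low, hpci, hcnti]
  have hlowi : low s i = s.cnt i := by simp [low, hg]
  have hcdi' : cntd s' i = s.nCand i := by simp [cntd, hpci, hn]
  have hcdi : cntd s i = s.nCand i := by simp [cntd, hg]
  have hlow : ∀ q, q ≠ i → low s' q = low s q := fun q hq => by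
    simp [low, hpc q hq, hcnt q hq]
  have hcn : ∀ q, cntd s' q = cntd s q := fun q => by
    by_cases hq : q = i
    · subst hq; rw [hcdi', hcdi]
    · simp [cntd, hpc q hq, hn q]
  have hkey : ∀ r : Fin N, r ≠ i → ScanSt (s.pc r) →
      s.cnt i - 1 ≤ (r : ℕ) → s.cnt i ≤ (r : ℕ) := by
    intro r hri hr hle
    rcases Nat.lt_or_ge (r : ℕ) (s.cnt i) with hlt | hge
    · exfalso
      have hrj : r = j := Fin.ext (by omega)
      subst hrj
      exact hf (hF r (scan_cand hr))
    · exact hge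
  have hDi : Dq s' i ↔ Dq s i := by
    unfold Dq
    rw [hlowi', hlowi, hcdi', hcdi]
    by_cases hle : s.cnt i ≤ (i : ℕ)
    · rw [if_pos hle, if_pos (by omega)]
    · rw [if_neg hle, if_neg (by omega)]
  have hD : ∀ q, Dq s' q ↔ Dq s q := fun q => by
    by_cases hq : q = i
    · subst hq; exact hDi
    · simp [Dq, hlow q hq, hcn q]
  refine ⟨?_, ?_, ?_, ?_⟩
  · intro q hq
    rw [hflag]
    rcases eq_or_ne q i with rfl | hqi
    · exact hF q (by simp [CandSt, hg])
    · exact hF q (by rwa [hpc q hqi] at hq)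
  · intro q hq hle
    rw [hcn]
    rcases eq_or_ne q i with rfl | hqi
    · exact hS q (by simp [ScanSt, hg])
        (by rw [hlowi]; rw [hlowi'] at hle; omega)
    · exact hS q (by rwa [hpc q hqi] at hq) (by rwa [hlow q hqi] at hle)
  · intro q r hqr hq hr h1 h2
    rw [hD q, hD r]
    rcases eq_or_ne q i with rfl | hqi
    · have hri : r ≠ q := Ne.symm hqr
      have hr' : ScanSt (s.pc r) := by rwa [hpc r hri] at hr
      have h1' := hkey r hri hr' (by rwa [hlowi'] at h1)
      exact hM q r hqr (by simp [ScanSt, hg]) hr'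
        (by rw [hlowi]; exact h1') (by rwa [hlow r hri] at h2)
    rcases eq_or_ne r i with rfl | hri
    · have hq' : ScanSt (s.pc q) := by rwa [hpc q hqi] at hq
      have h2' := hkey q hqi hq' (by rwa [hlowi'] at h2)
      exact hM q r hqr hq' (by simp [ScanSt, hg])
        (by rwa [hlow q hqi] at h1) (by rw [hlowi]; exact h2')
    · exact hM q r hqr (by rwa [hpc q hqi] at hq) (by rwa [hpc r hri] at hr)
        (by rwa [hlow q hqi] at h1) (by rwa [hlow r hri] at h2)
  · intro q hq
    rw [hn]
    rcases eq_or_ne q i with rfl | hqi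
    · rw [hpci] at hq; rcases hq with h | h <;> cases h
    · exact hH q (by rwa [hpc q hqi] at hq)

/-- Preservation of the scan invariant by transition `t34cand`. -/
lemma scanOK_t34cand {s s' : St N} {i j : Fin N} (hok : ScanOK s)
    (hg : s.pc i = .s34) (hc : s.cnt i ≠ 0) (hj : (j : ℕ) = s.cnt i - 1)
    (hpc : ∀ q, q ≠ i → s'.pc q = s.pc q) (hpci : s'.pc i = .s341)
    (hflag : ∀ q, s'.flag q = s.flag q)
    (hcnt : ∀ q, s'.cnt q = s.cnt q)
    (hn : ∀ q, s'.nCand q = s.nCand q) : ScanOK s' := by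
  obtain ⟨hF, hS, hM, hH⟩ := hok
  have hlowi' : low s' i = s.cnt i - 1 := by simp [low, hpci, hcnt]
  have hlowi : low s i = s.cnt i := by simp [low, hg]
  have hcdi' : cntd s' i = s.nCand i + 1 := by simp [cntd, hpci, hn]
  have hcdi : cntd s i = s.nCand i := by simp [cntd, hg]
  have hlow : ∀ q, q ≠ i → low s' q = low s q := fun q hq => by
    simp [low, hpc q hq, hcnt q]
  have hcn : ∀ q, q ≠ i → cntd s' q = cntd s q := fun q hq => by
    simp [cntd, hpc q hq, hn q]
  have hD : ∀ q, q ≠ i → (Dq s' q ↔ Dq s q) := fun q hq => by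
    simp [Dq, hlow q hq, hcn q hq]
  have hkey : ∀ r : Fin N, r ≠ i → ScanSt (s.pc r) →
      s.cnt i - 1 ≤ (r : ℕ) → low s r ≤ (i : ℕ) → Dq s' i ∨ Dq s r := by
    intro r hri hr h1 h2
    by_cases hself : s.cnt i - 1 ≤ (i : ℕ)
    · by_cases hii : (i : ℕ) = s.cnt i - 1
      · have hrge : s.cnt i ≤ (r : ℕ) := by
          have hne : (r : ℕ) ≠ s.cnt i - 1 := by
            intro e; exact hri (Fin.ext (by omega))
          omega
        rcases hM i r (fun e => hri e.symm) (by simp [ScanSt, hg]) hr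
          (by rw [hlowi]; exact hrge) h2 with hd | hd
        · left
          unfold Dq at hd ⊢
          rw [hlowi', hcdi']
          rw [hlowi, hcdi] at hd
          have hnotle : ¬ s.cnt i ≤ (i : ℕ) := by omega
          rw [if_neg hnotle] at hd
          rw [if_pos hself]
          omega
        · right; exact hd
      · have hle1 : 1 ≤ s.nCand i := by
          have := hS i (by simp [ScanSt, hg]) (by rw [hlowi]; omega)
          rwa [hcdi] at this
        left
        unfold Dq
        rw [hlowi', hcdi']
        split <;> omega
    · left
      unfold Dq
      rw [hlowi', hcdi', if_neg hself]
      omega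
  refine ⟨?_, ?_, ?_, ?_⟩
  · intro q hq
    rw [hflag]
    rcases eq_or_ne q i with rfl | hqi
    · exact hF q (by simp [CandSt, hg])
    · exact hF q (by rwa [hpc q hqi] at hq)
  · intro q hq hle
    rcases eq_or_ne q i with rfl | hqi
    · rw [hcdi']; omega
    · rw [hcn q hqi]
      exact hS q (by rwa [hpc q hqi] at hq) (by rwa [hlow q hqi] at hle)
  · intro q r hqr hq hr h1 h2
    rcases eq_or_ne q i with rfl | hqi
    · have hri : r ≠ q := Ne.symm hqr
      have hr' : ScanSt (s.pc r) := by rwa [hpc r hri] at hr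
      rcases hkey r hri hr' (by rwa [hlowi'] at h1)
        (by rwa [hlow r hri] at h2) with hd | hd
      · exact Or.inl hd
      · exact Or.inr ((hD r hri).mpr hd)
    rcases eq_or_ne r i with rfl | hri
    · have hq' : ScanSt (s.pc q) := by rwa [hpc q hqi] at hq
      rcases hkey q hqi hq' (by rwa [hlowi'] at h2)
        (by rwa [hlow q hqi] at h1) with hd | hd
      · exact Or.inr hd
      · exact Or.inl ((hD q hqi).mpr hd)
    · rw [hD q hqi, hD r hri]
      exact hM q r hqr (by rwa [hpc q hqi] at hq) (by rwa [hpc r hri] at hr)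
        (by rwa [hlow q hqi] at h1) (by rwa [hlow r hri] at h2)
  · intro q hq
    rw [hn]
    rcases eq_or_ne q i with rfl | hqi
    · rw [hpci] at hq; rcases hq with h | h <;> cases h
    · exact hH q (by rwa [hpc q hqi] at hq)

/-- Handy bundling for "boring" transitions. -/
lemma inv_boring {s s' : St N} (i : Fin N) (hI : Inv s)
    (hpc : ∀ q, q ≠ i → s'.pc q = s.pc q)
    (hturn : s'.turn = s.turn)
    (hflag : ∀ q, q ≠ i → s'.flag q = s.flag q)
    (hcnt : ∀ q, q ≠ i → s'.cnt q = s.cnt q)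
    (hn : ∀ q, q ≠ i → s'.nCand q = s.nCand q)
    (hscan : ¬ ScanSt (s'.pc i)) (h351 : s'.pc i ≠ .s351 ∧ s'.pc i ≠ .s352)
    (hcand : CandSt (s'.pc i) → s'.flag i = .candidate)
    (hecs : ¬ ExtCS (s'.pc i)) : Inv s' :=
  ⟨scanOK_congr i hI.1 hpc hscan h351 hcand hflag hcnt hn,
   turnOK_congr i hI.2 hpc hturn ⟨h351.1, hecs⟩⟩

/-- The global invariant is preserved by every transition. -/
lemma inv_step {s s' : St N} {i : Fin N} (hI : Inv s) (h : Step i s s') :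
    Inv s' := by
  have hup : ∀ (p' : PC) (q : Fin N), q ≠ i →
      Function.update s.pc i p' q = s.pc q := fun p' q hq =>
    Function.update_of_ne hq _ _
  cases h with
  | t1 _ _ hg =>
      exact inv_boring i hI (hup _) rfl
        (fun q hq => Function.update_of_ne hq _ _) (fun q _ => rfl)
        (fun q _ => rfl) (by simp [ScanSt]) ⟨by simp, by simp⟩
        (by simp [CandSt]) (by simp [ExtCS])
  | t2free _ _ hg ht =>
      exact inv_boring i hI (hup _) rfl (fun q _ => rfl) (fun q _ => rfl)
        (fun q _ => rfl) (by simp [ScanSt]) ⟨by simp, by simp⟩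
        (by simp [CandSt]) (by simp [ExtCS])
  | t2id _ _ j hg ht =>
      exact inv_boring i hI (hup _) rfl (fun q _ => rfl) (fun q _ => rfl)
        (fun q _ => rfl) (by simp [ScanSt]) ⟨by simp, by simp⟩
        (by simp [CandSt]) (by simp [ExtCS])
  | t3 _ _ hg =>
      exact inv_boring i hI (hup _) rfl
        (fun q hq => Function.update_of_ne hq _ _) (fun q _ => rfl)
        (fun q _ => rfl) (by simp [ScanSt]) ⟨by simp, by simp⟩
        (by simp [CandSt]) (by simp [ExtCS])
  | t32enter _ _ hg ht hf =>
      exact inv_boring i hI (hup _) rfl (fun q _ => rfl) (fun q _ => rfl)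
        (fun q _ => rfl) (by simp [ScanSt]) ⟨by simp, by simp⟩
        (fun _ => hf) (by simp [ExtCS])
  | t32exit _ _ hg hcnd =>
      exact inv_boring i hI (hup _) rfl (fun q _ => rfl) (fun q _ => rfl)
        (fun q _ => rfl) (by simp [ScanSt]) ⟨by simp, by simp⟩
        (by simp [CandSt]) (by simp [ExtCS])
  | t33 _ _ hg =>
      refine ⟨scanOK_t33 i hI.1 hg (hup _) (by simp) (fun q => rfl)
        (fun q hq => Function.update_of_ne hq _ _) (by simp)
        (fun q hq => Function.update_of_ne hq _ _), ?_⟩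
      exact turnOK_congr i hI.2 (hup _) rfl ⟨by simp, by simp [ExtCS]⟩
  | t34done _ _ hg hc =>
      refine ⟨scanOK_same i hI.1 (hup _) (fun q => rfl) (fun q _ => rfl)
        (fun q _ => rfl) (by simp [ScanSt, hg]) (by simp [ScanSt])
        (by simp [low, hg, hc]) (by simp [cntd, hg]) (by simp), ?_⟩
      exact turnOK_congr i hI.2 (hup _) rfl ⟨by simp, by simp [ExtCS]⟩
  | t34cand _ _ j hg hc hj hf =>
      refine ⟨scanOK_t34cand hI.1 hg hc hj (hup _) (by simp) (fun q => rfl)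
        (fun q => rfl) (fun q => rfl), ?_⟩
      exact turnOK_congr i hI.2 (hup _) rfl ⟨by simp, by simp [ExtCS]⟩
  | t34nocand _ _ j hg hc hj hf =>
      refine ⟨scanOK_t34nocand hI.1 hg hc hj hf (hup _) (by simp)
        (fun q => rfl) (fun q hq => Function.update_of_ne hq _ _) (by simp)
        (fun q => rfl), ?_⟩
      exact turnOK_congr i hI.2 (hup _) rfl ⟨by simp, by simp [ExtCS]⟩
  | t341 _ _ hg =>
      refine ⟨scanOK_same i hI.1 (hup _) (fun q => rfl)
        (fun q hq => Function.update_of_ne hq _ _)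
        (fun q hq => Function.update_of_ne hq _ _)
        (by simp [ScanSt, hg]) (by simp [ScanSt])
        (by simp [low, hg]) (by simp [cntd, hg]) (by simp), ?_⟩
      exact turnOK_congr i hI.2 (hup _) rfl ⟨by simp, by simp [ExtCS]⟩
  | t35yes _ _ hg ht hn1 =>
      refine ⟨scanOK_same i hI.1 (hup _) (fun q => rfl) (fun q _ => rfl)
        (fun q _ => rfl) (by simp [ScanSt, hg]) (by simp [ScanSt])
        (by simp [low, hg]) (by simp [cntd, hg]) (fun _ => hn1), ?_⟩
      refine ⟨?_, ?_, ?_⟩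
      · intro _ q
        by_cases hqi : q = i
        · subst hqi; simp [ExtCS]
        · simp only [Function.update_of_ne hqi]; exact hI.2.1 ht q
      · intro h'
        exfalso
        have h'' : (Turn.free : Turn N) = .thinking := by rw [← ht]; exact h'
        cases h''
      · intro x hx
        exfalso
        have h'' : (Turn.free : Turn N) = .id x := by rw [← ht]; exact hx
        cases h''
  | t35no _ _ hg hcnd =>
      exact inv_boring i hI (hup _) rfl (fun q _ => rfl) (fun q _ => rfl)
        (fun q _ => rfl) (by simp [ScanSt]) ⟨by simp, by simp⟩
        (fun _ => hI.1.1 i (by simp [CandSt, hg])) (by simp [ExtCS])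
  | t351 _ _ hg =>
      have hfree : s.turn = .free := turn_free_of_351 hI.2 hg
      have hecs : ∀ q, ¬ ExtCS (s.pc q) := hI.2.1 hfree
      refine ⟨scanOK_same i hI.1 (hup _) (fun q => rfl) (fun q _ => rfl)
        (fun q _ => rfl) (by simp [ScanSt, hg]) (by simp [ScanSt])
        (by simp [low, hg]) (by simp [cntd, hg])
        (fun _ => hI.1.2.2.2 i (Or.inl hg)), ?_⟩
      refine ⟨?_, ?_, ?_⟩
      · intro h'
        exact absurd (show (Turn.id i : Turn N) = .free from h') (by simp)
      · intro h'
        exact absurd (show (Turn.id i : Turn N) = .thinking from h') (by simp)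
      · intro x hx
        have hix : i = x := by
          injection (show (Turn.id i : Turn N) = .id x from hx)
        subst hix
        refine ⟨?_, ?_, ?_⟩
        · intro q
          by_cases hqi : q = i
          · subst hqi; simp
          · simp only [Function.update_of_ne hqi]
            intro hq351
            exact not_two_351 hI.1 hqi hg hq351
        · intro q
          by_cases hqi : q = i
          · subst hqi; simp
          · simp only [Function.update_of_ne hqi]
            have := hecs q
            exact ⟨fun h5 => this (Or.inr (Or.inl h5)),
              fun h6 => this (Or.inr (Or.inr (Or.inl h6))),
              fun h63 => this (Or.inr (Or.inr (Or.inr h63)))⟩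
        · intro q hq
          by_cases hqi : q = i
          · exact hqi
          · simp only [Function.update_of_ne hqi] at hq
            exact absurd (Or.inl hq) (hecs q)
  | t352 _ _ hg =>
      exact inv_boring i hI (hup _) rfl (fun q _ => rfl) (fun q _ => rfl)
        (fun q _ => rfl) (by simp [ScanSt]) ⟨by simp, by simp⟩
        (fun _ => hI.1.1 i (by simp [CandSt, hg])) (by simp [ExtCS])
  | t36yes _ _ hg hcnd =>
      exact inv_boring i hI (hup _) rfl
        (fun q hq => Function.update_of_ne hq _ _) (fun q _ => rfl)
        (fun q _ => rfl) (by simp [ScanSt]) ⟨by simp, by simp⟩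
        (by simp [CandSt]) (by simp [ExtCS])
  | t36no _ _ hg hcnd =>
      exact inv_boring i hI (hup _) rfl (fun q _ => rfl) (fun q _ => rfl)
        (fun q _ => rfl) (by simp [ScanSt]) ⟨by simp, by simp⟩
        (by simp [CandSt]) (by simp [ExtCS])
  | t37 _ _ hg =>
      exact inv_boring i hI (hup _) rfl
        (fun q hq => Function.update_of_ne hq _ _) (fun q _ => rfl)
        (fun q _ => rfl) (by simp [ScanSt]) ⟨by simp, by simp⟩
        (by simp [CandSt]) (by simp [ExtCS])
  | t4 _ _ hg ht =>
      refine ⟨scanOK_congr i hI.1 (hup _) (by simp [ScanSt]) ⟨by simp, by simp⟩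
        (by simp [CandSt]) (fun q _ => rfl) (fun q _ => rfl)
        (fun q _ => rfl), ?_⟩
      obtain ⟨h1, h2, h3⟩ := hI.2.2.2 i ht
      refine ⟨?_, ?_, ?_⟩
      · intro h'
        exfalso
        have h'' : (Turn.id i : Turn N) = .free := by rw [← ht]; exact h'
        cases h''
      · intro h'
        exfalso
        have h'' : (Turn.id i : Turn N) = .thinking := by rw [← ht]; exact h'
        cases h''
      · intro x hx
        have hix : i = x := by
          injection (show (Turn.id i : Turn N) = .id x by rw [← ht]; exact hx)
        subst hix
        refine ⟨?_, ?_, ?_⟩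
        · intro q
          by_cases hqi : q = i
          · subst hqi; simp
          · simp only [Function.update_of_ne hqi]; exact h1 q
        · intro q
          by_cases hqi : q = i
          · subst hqi; simp
          · simp only [Function.update_of_ne hqi]; exact h2 q
        · intro q hq
          by_cases hqi : q = i
          · exact hqi
          · simp only [Function.update_of_ne hqi] at hq; exact h3 q hq
  | tcs _ _ hg =>
      have hti : s.turn = .id i := turn_id_of_cs hI.2 hg
      obtain ⟨h1, h2, h3⟩ := hI.2.2.2 i hti
      refine ⟨scanOK_congr i hI.1 (hup _) (by simp [ScanSt]) ⟨by simp, by simp⟩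
        (by simp [CandSt]) (fun q _ => rfl) (fun q _ => rfl)
        (fun q _ => rfl), ?_⟩
      refine ⟨?_, ?_, ?_⟩
      · intro h'
        exact absurd (show (Turn.thinking : Turn N) = .free from h') (by simp)
      · intro _
        refine ⟨?_, ?_, i, ?_⟩
        · intro q
          by_cases hqi : q = i
          · subst hqi; simp
          · simp only [Function.update_of_ne hqi]; exact h1 q
        · intro q
          by_cases hqi : q = i
          · subst hqi; simp
          · simp only [Function.update_of_ne hqi]
            intro hcs'
            exact absurd (h3 q hcs') hqi
        · intro q hq
          by_cases hqi : q = i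
          · exact hqi
          · simp only [Function.update_of_ne hqi] at hq
            rcases hq with h | h | h | h
            · exact h3 q h
            · exact absurd h (h2 q).1
            · exact absurd h (h2 q).2.1
            · exact absurd h (h2 q).2.2
      · intro x hx
        exact absurd (show (Turn.thinking : Turn N) = .id x from hx) (by simp)
  | t5 _ _ hg =>
      refine ⟨scanOK_congr i hI.1 (hup _) (by simp [ScanSt]) ⟨by simp, by simp⟩
        (by simp [CandSt]) (fun q hq => Function.update_of_ne hq _ _)
        (fun q hq => Function.update_of_ne hq _ _) (fun q _ => rfl), ?_⟩
      exact turnOK_exit i hI.2 (hup _) rfl (Or.inl hg) (Or.inl (by simp))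
  | t6exit _ _ hg hcnd =>
      refine ⟨scanOK_congr i hI.1 (hup _) (by simp [ScanSt]) ⟨by simp, by simp⟩
        (by simp [CandSt]) (fun q _ => rfl) (fun q _ => rfl)
        (fun q _ => rfl), ?_⟩
      exact turnOK_exit i hI.2 (hup _) rfl (Or.inr (Or.inl hg))
        (Or.inr (by simp))
  | t6found _ _ hg hnt hcnt2 hf =>
      refine ⟨scanOK_congr i hI.1 (hup _) (by simp [ScanSt]) ⟨by simp, by simp⟩
        (by simp [CandSt]) (fun q _ => rfl)
        (fun q hq => Function.update_of_ne hq _ _) (fun q _ => rfl), ?_⟩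
      exact turnOK_exit i hI.2 (hup _) rfl (Or.inr (Or.inl hg))
        (Or.inl (by simp))
  | t6notfound _ _ hg hnt hcnt2 hf =>
      refine ⟨scanOK_congr i hI.1 (hup _) (by simp [ScanSt]) ⟨by simp, by simp⟩
        (by simp [CandSt]) (fun q _ => rfl)
        (fun q hq => Function.update_of_ne hq _ _) (fun q _ => rfl), ?_⟩
      exact turnOK_exit i hI.2 (hup _) rfl (Or.inr (Or.inl hg))
        (Or.inl (by simp))
  | t63free _ _ hg hnt =>
      have htk : s.turn = .thinking :=
        turn_think_of_exit hI.2 (Or.inr (Or.inr hg))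
      obtain ⟨h1, h2, x, hx⟩ := hI.2.2.1 htk
      have hxi : i = x := hx i (by simp [ExtCS, hg])
      refine ⟨scanOK_congr i hI.1 (hup _) (by simp [ScanSt]) ⟨by simp, by simp⟩
        (by simp [CandSt]) (fun q _ => rfl) (fun q _ => rfl)
        (fun q _ => rfl), ?_⟩
      refine ⟨?_, ?_, ?_⟩
      · intro _ q
        by_cases hqi : q = i
        · subst hqi; simp [ExtCS]
        · simp only [Function.update_of_ne hqi]
          intro hq
          exact hqi ((hx q hq).trans hxi.symm)
      · intro h'
        exact absurd (show (Turn.free : Turn N) = .thinking from h') (by simp)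
      · intro y hy
        exact absurd (show (Turn.free : Turn N) = .id y from hy) (by simp)
  | t63id _ _ b hg hnt =>
      have htk : s.turn = .thinking :=
        turn_think_of_exit hI.2 (Or.inr (Or.inr hg))
      obtain ⟨h1, h2, x, hx⟩ := hI.2.2.1 htk
      have hxi : i = x := hx i (by simp [ExtCS, hg])
      refine ⟨scanOK_congr i hI.1 (hup _) (by simp [ScanSt]) ⟨by simp, by simp⟩
        (by simp [CandSt]) (fun q _ => rfl) (fun q _ => rfl)
        (fun q _ => rfl), ?_⟩
      refine ⟨?_, ?_, ?_⟩
      · intro h'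
        exact absurd (show (Turn.id b : Turn N) = .free from h') (by simp)
      · intro h'
        exact absurd (show (Turn.id b : Turn N) = .thinking from h') (by simp)
      · intro y hy
        have hby : b = y := by
          injection (show (Turn.id b : Turn N) = .id y from hy)
        subst hby
        refine ⟨?_, ?_, ?_⟩
        · intro q
          by_cases hqi : q = i
          · subst hqi; simp
          · simp only [Function.update_of_ne hqi]; exact h1 q
        · intro q
          by_cases hqi : q = i
          · subst hqi; simp
          · simp only [Function.update_of_ne hqi]
            exact ⟨fun h5 => hqi ((hx q (Or.inr (Or.inl h5))).trans hxi.symm),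
              fun h6 => hqi ((hx q (Or.inr (Or.inr (Or.inl h6)))).trans hxi.symm),
              fun h63 => hqi ((hx q (Or.inr (Or.inr (Or.inr h63)))).trans hxi.symm)⟩
        · intro q hq
          by_cases hqi : q = i
          · subst hqi; simp at hq
          · simp only [Function.update_of_ne hqi] at hq
            exact absurd hq (h2 q)

lemma inv_init (N : ℕ) : Inv (initSt N) := by
  refine ⟨⟨?_, ?_, ?_, ?_⟩, ?_, ?_, ?_⟩ <;>
    intros <;> simp_all [initSt, CandSt, ScanSt, ExtCS]

lemma exec_inv (e : Exec N) : ∀ k, Inv (e.states k) := by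
  intro k
  induction k with
  | zero => rw [e.init]; exact inv_init N
  | succ k ih =>
      have hstep := e.step k
      cases hsch : e.sched k with
      | none =>
          have heq : e.states (k + 1) = e.states k := by
            rw [hsch] at hstep; exact hstep
          rw [heq]; exact ih
      | some i =>
          have hs : Step i (e.states k) (e.states (k + 1)) := by
            rw [hsch] at hstep; exact hstep
          exact inv_step ih hs

/-- While `turn = a` and `a` is not in the critical section, no transition
changes `turn`. -/
lemma step_keep {s s' : St N} {i a : Fin N} (hI : Inv s) (h : Step i s s')
    (ht : s.turn = .id a) (hcs : s.pc a ≠ .cs) : s'.turn = .id a := by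
  obtain ⟨h1, h2, h3⟩ := hI.2.2.2 a ht
  cases h with
  | t351 _ _ hg => exact absurd hg (h1 i)
  | tcs _ _ hg => exact absurd ((h3 i hg) ▸ hg) hcs
  | t63free _ _ hg hn => exact absurd hg (h2 i).2.2
  | t63id _ _ b hg hn => exact absurd hg (h2 i).2.2
  | _ => exact ht

/-- The assigning step itself sets `turn = a`. -/
lemma step_assign {s s' : St N} {p a : Fin N} (h : Step p s s')
    (hc : (p = a ∧ s.pc p = .s351) ∨
      (s.pc p = .s63 ∧ s.nextTurn p = .id a)) : s'.turn = .id a := by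
  cases h <;> rcases hc with ⟨rfl, hpc⟩ | ⟨hpc, hnt⟩ <;> simp_all

end Sym

open Sym in
/-- **Lemma: a turn assignment is fixed (symmetric algorithm).**
In every execution, if at some step `n` the shared variable `turn` is
assigned the value `a` — either by process `a` itself taking the transition
at state 3.5.1 that sets `turn := a` (reaching 3.5.2), or by some process at
state 6.3 with `nextTurn = a` setting `turn := nextTurn` (reaching 8) —
then `turn` keeps the value `a` (no process changes it) until process `a`
enters the critical section. -/
theorem sym_turn_assignment_fixed {N : ℕ} (e : Exec N) (n : ℕ) (a : Fin N)
    (hassign : ∃ p : Fin N, e.sched n = some p ∧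
      ((p = a ∧ (e.states n).pc p = PC.s351) ∨
       ((e.states n).pc p = PC.s63 ∧ (e.states n).nextTurn p = Turn.id a))) :
    ∀ m, n < m →
      (∀ k, n < k → k ≤ m → (e.states k).pc a ≠ PC.cs) →
      (e.states m).turn = Turn.id a := by
  obtain ⟨p, hsch, hcase⟩ := hassign
  have hinv : ∀ k, Inv (e.states k) := exec_inv e
  have hstep : Step p (e.states n) (e.states (n + 1)) := by
    have hs := e.step n; rw [hsch] at hs; exact hs
  have h1 : (e.states (n + 1)).turn = Turn.id a := step_assign hstep hcase
  have main : ∀ m, n + 1 ≤ m →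
      (∀ k, n < k → k ≤ m → (e.states k).pc a ≠ PC.cs) →
      (e.states m).turn = Turn.id a := by
    intro m hm
    induction m, hm using Nat.le_induction with
    | base => intro _; exact h1
    | succ m hm ih =>
        intro hcs
        have hturn := ih fun k hk1 hk2 => hcs k hk1 (Nat.le_succ_of_le hk2)
        cases hsch2 : e.sched m with
        | none =>
            have heq : e.states (m + 1) = e.states m := by
              have hs := e.step m; rw [hsch2] at hs; exact hs
            rw [heq]; exact hturn
        | some i =>
            have hs : Step i (e.states m) (e.states (m + 1)) := by
              have hs := e.step m; rw [hsch2] at hs; exact hs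
            exact step_keep (hinv m) hs hturn
              (hcs m (by omega) (by omega))
  intro m hm hcs
  exact main m hm hcs
end
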